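/- arXiv:math/0602237 — 7 statements merged into one kernel-verified Lean document; each statement's English description precedes it below -/
import Mathlib

section
/- Let (a_n)_{n≥0} be a sequence of complex numbers, r>0, θ∈ℝ, A>0, B>0. Suppose the power series f̃(ζ) = ∑_{n≥1} a_n ζ^{n−1}/(n−1)! has positive radius of convergence and extends to a holomorphic function on the open strip B_r(θ) satisfying |f̃(ζ)| ≤ A·e^{B|ζ|} for all ζ ∈ B_r(θ). Then the function s_θf(z) := a_0 + ∫_0^{∞e^{iθ}} f̃(ζ) e^{−zζ} dζ is well defined and holomorphic on the half-plane {z ∈ ℂ : Re(z e^{iθ}) > B}, and for every z with Re(z e^{iθ}) > B and every integer n ≥ 0 one has |s_θf(z) − ∑_{k=0}^{n} a_k/z^k| ≤ A·e^{Br} · (n!/r^n) · 1/(|z|^n·(Re(z e^{iθ}) − B)). -/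
open Complex Real MeasureTheory Metric Set Filter

/-- The open strip of width `r` around the ray of direction `θ`:
`B_r(θ) = {ζ ∈ ℂ : dist(ζ, e^{iθ}·[0,∞)) < r}`. -/
noncomputable def borelStrip (r θ : ℝ) : Set ℂ :=
  {ζ : ℂ | Metric.infDist ζ ((fun t : ℝ => (t : ℂ) * Complex.exp (θ * Complex.I)) '' Set.Ici 0) < r}


lemma strip_open (r θ : ℝ) : IsOpen (borelStrip r θ) :=
  isOpen_lt (Metric.continuous_infDist_pt _) continuous_const

lemma myBallSub {r θ ρ : ℝ} (hρr : ρ < r) {t : ℝ} (ht : 0 ≤ t) :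
    closedBall ((t : ℂ) * Complex.exp (θ * Complex.I)) ρ ⊆ borelStrip r θ := by
  intro x hx
  have hmem : (t : ℂ) * Complex.exp (θ * Complex.I) ∈
      ((fun t : ℝ => (t : ℂ) * Complex.exp (θ * Complex.I)) '' Set.Ici 0) := ⟨t, ht, rfl⟩
  have := Metric.infDist_le_dist_of_mem (x := x) hmem
  simp only [borelStrip, Set.mem_setOf_eq]
  exact lt_of_le_of_lt (this.trans (mem_closedBall.mp hx)) hρr

lemma ray_mem {r θ : ℝ} (hr : 0 < r) {t : ℝ} (ht : 0 ≤ t) :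
    (t : ℂ) * Complex.exp (θ * Complex.I) ∈ borelStrip r θ := by
  have h0 : ((t : ℂ) * Complex.exp (θ * Complex.I)) ∈
      closedBall ((t : ℂ) * Complex.exp (θ * Complex.I)) 0 := mem_closedBall_self le_rfl
  exact myBallSub hr ht h0

lemma norm_te (θ : ℝ) {t : ℝ} (ht : 0 ≤ t) : ‖(t : ℂ) * Complex.exp (θ * Complex.I)‖ = t := by
  rw [norm_mul, Complex.norm_real, Real.norm_eq_abs, _root_.abs_of_nonneg ht,
    Complex.norm_exp_ofReal_mul_I, mul_one]

lemma norm_exp_neg (z : ℂ) (θ : ℝ) (t : ℝ) :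
    ‖Complex.exp (-z * ((t : ℂ) * Complex.exp (θ * Complex.I)))‖ =
      Real.exp (-((z * Complex.exp (θ * Complex.I)).re * t)) := by
  rw [Complex.norm_exp]
  congr 1
  have : -z * ((t : ℂ) * Complex.exp (θ * Complex.I)) =
      (t : ℂ) * (-(z * Complex.exp (θ * Complex.I))) := by ring
  rw [this, Complex.re_ofReal_mul, Complex.neg_re]
  ring


lemma cauchy_est {f : ℂ → ℂ} {w : ℂ} {ρ C : ℝ} (hρ : 0 < ρ)
    (hd : DifferentiableOn ℂ f (closedBall w ρ)) (hC : ∀ x ∈ closedBall w ρ, ‖f x‖ ≤ C)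
    (n : ℕ) : ‖iteratedDeriv n f w‖ ≤ (Nat.factorial n : ℝ) * C / ρ ^ n := by
  have hC0 : 0 ≤ C := le_trans (norm_nonneg _) (hC w (mem_closedBall_self hρ.le))
  lift ρ to NNReal using hρ.le with ρ'
  have hρ' : 0 < ρ' := by exact_mod_cast hρ
  have h := hd.hasFPowerSeriesOnBall hρ'
  set p := cauchyPowerSeries f w ρ' with hp
  have h1 : ((Nat.factorial n : ℕ) : ℂ) • (p n fun _ => (1:ℂ)) = iteratedDeriv n f w := by
    rw [iteratedDeriv_eq_iteratedFDeriv, ← h.factorial_smul (1:ℂ) n]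
    simp [← Nat.cast_smul_eq_nsmul ℂ]
  have h2 : ‖p n fun _ => (1:ℂ)‖ ≤ ‖p n‖ := by
    simpa using (p n).le_opNorm fun _ => (1:ℂ)
  have h3 : ‖p n‖ ≤ C / ρ' ^ n := by
    refine (norm_cauchyPowerSeries_le f w ρ' n).trans ?_
    have hint : ∫ θ : ℝ in (0)..2 * π, ‖f (circleMap w ρ' θ)‖ ≤ C * (2 * π) := by
      have hcont : Continuous fun θ : ℝ => ‖f (circleMap w ρ' θ)‖ := by
        refine ((hd.continuousOn.comp_continuous (continuous_circleMap w ρ')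
          fun θ => sphere_subset_closedBall (circleMap_mem_sphere w ρ'.coe_nonneg θ))).norm
      calc ∫ θ : ℝ in (0)..2 * π, ‖f (circleMap w ρ' θ)‖
          ≤ ∫ _ : ℝ in (0)..2 * π, C := by
            refine intervalIntegral.integral_mono_on Real.two_pi_pos.le
              (hcont.intervalIntegrable _ _) (intervalIntegrable_const) ?_
            intro x _
            exact hC _ (sphere_subset_closedBall (circleMap_mem_sphere w ρ'.coe_nonneg x))
        _ = C * (2 * π) := by simp [mul_comm]
    have : (2 * π)⁻¹ * ∫ θ : ℝ in (0)..2 * π, ‖f (circleMap w ρ' θ)‖ ≤ C := by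
      rw [inv_mul_le_iff₀ Real.two_pi_pos]
      linarith [hint]
    calc ((2 * π)⁻¹ * ∫ θ : ℝ in (0)..2 * π, ‖f (circleMap w ρ' θ)‖) * |(ρ' : ℝ)|⁻¹ ^ n
        ≤ C * |(ρ' : ℝ)|⁻¹ ^ n := by
          apply mul_le_mul_of_nonneg_right this
          positivity
      _ = C / ρ' ^ n := by
          rw [_root_.abs_of_nonneg ρ'.coe_nonneg, div_eq_mul_inv, inv_pow]
  calc ‖iteratedDeriv n f w‖ = (Nat.factorial n : ℝ) * ‖p n fun _ => (1:ℂ)‖ := by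
        rw [← h1, norm_smul]; simp
    _ ≤ (Nat.factorial n : ℝ) * (C / ρ' ^ n) := by
        exact mul_le_mul_of_nonneg_left (h2.trans h3) (by positivity)
    _ = (Nat.factorial n : ℝ) * C / ρ' ^ n := by ring

lemma coeff_eq (a : ℕ → ℂ) (F : ℂ → ℂ)
    (hconv : ∃ ρ > 0, ∀ ζ : ℂ, ‖ζ‖ < ρ →
      HasSum (fun n : ℕ => a (n + 1) * ζ ^ n / (Nat.factorial n : ℂ)) (F ζ)) (n : ℕ) :
    iteratedDeriv n F 0 = a (n + 1) := by
  obtain ⟨ρ, hρ, hsum⟩ := hconv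
  set c : ℕ → ℂ := fun n => a (n + 1) / (Nat.factorial n : ℂ) with hc
  set p := FormalMultilinearSeries.ofScalars ℂ c with hp
  have hζ : ‖((ρ / 2 : ℝ) : ℂ)‖ < ρ := by
    rw [Complex.norm_real, Real.norm_eq_abs, abs_of_pos (by linarith)]; linarith
  set ρ₂ : NNReal := ⟨ρ / 2, by linarith⟩ with hρ₂
  have hrad : (ρ₂ : ENNReal) ≤ p.radius := by
    apply p.le_radius_of_tendsto (l := 0)
    have h0 := ((hsum _ hζ).summable.tendsto_atTop_zero).norm
    simp only [norm_zero] at h0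
    convert h0 using 2 with n
    rw [FormalMultilinearSeries.ofScalars_norm, hc]
    have h2 : ‖((ρ / 2 : ℝ) : ℂ)‖ = ρ / 2 := by
      rw [Complex.norm_real, Real.norm_eq_abs, abs_of_pos (by linarith)]
    have hρc : (ρ₂ : ℝ) = ρ / 2 := rfl
    simp only [norm_div, norm_mul, norm_pow, h2, hρc]
    ring
  have hball : HasFPowerSeriesOnBall F p 0 (ρ₂ : ENNReal) := by
    refine ⟨hrad, ENNReal.coe_pos.mpr (by rw [← NNReal.coe_pos]; show (0:ℝ) < ρ/2; linarith), ?_⟩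
    intro y hy
    have hy' : ‖y‖ < ρ := by
      rw [mem_emetric_ball_zero_iff] at hy
      have : (‖y‖₊ : ℝ) < ρ / 2 := by exact_mod_cast hy
      have : ‖y‖ < ρ/2 := this
      linarith
    have := hsum y hy'
    simp only [zero_add]
    convert this using 2 with n
    · rfl
    rw [FormalMultilinearSeries.ofScalars_apply_eq]
    simp [hc, smul_eq_mul]
    ring
  have hfs := hball.factorial_smul (1 : ℂ) n
  rw [iteratedDeriv_eq_iteratedFDeriv, ← hfs, hp, FormalMultilinearSeries.ofScalars_apply_eq]
  simp only [one_pow, smul_eq_mul, mul_one, hc]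
  rw [nsmul_eq_mul, mul_comm]
  exact div_mul_cancel₀ _ ((Nat.cast_ne_zero (R := ℂ)).mpr n.factorial_ne_zero)

section main
variable {a : ℕ → ℂ} {r θ A B : ℝ} {F : ℂ → ℂ}
  (hr : 0 < r) (hA : 0 < A) (hB : 0 < B)
  (hF : DifferentiableOn ℂ F (borelStrip r θ))
  (hbound : ∀ ζ ∈ borelStrip r θ, ‖F ζ‖ ≤ A * Real.exp (B * ‖ζ‖))


include hr hF in
lemma Danalytic (n : ℕ) : AnalyticOnNhd ℂ (iteratedDeriv n F) (borelStrip r θ) := by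
  induction n with
  | zero => simpa [iteratedDeriv_zero] using hF.analyticOnNhd (strip_open r θ)
  | succ n ih =>
      have : iteratedDeriv (n+1) F = deriv (iteratedDeriv n F) := by
        funext x; rw [iteratedDeriv_succ]
      rw [this]
      exact ih.deriv

include hF hbound hA hB in
lemma Dbound {ρ : ℝ} (hρ : 0 < ρ) (hρr : ρ < r) (n : ℕ) {t : ℝ} (ht : 0 ≤ t) :
    ‖iteratedDeriv n F ((t : ℂ) * Complex.exp (θ * Complex.I))‖ ≤
      ((Nat.factorial n : ℝ) * (A * Real.exp (B * ρ)) / ρ ^ n) * Real.exp (B * t) := by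
  have h1 : ‖iteratedDeriv n F ((t : ℂ) * Complex.exp (θ * Complex.I))‖ ≤
      (Nat.factorial n : ℝ) * (A * Real.exp (B * (t + ρ))) / ρ ^ n := by
    refine cauchy_est hρ (hF.mono (myBallSub hρr ht)) (fun x hx => ?_) n
    refine (hbound x (myBallSub hρr ht hx)).trans ?_
    have hx' : ‖x‖ ≤ t + ρ := by
      calc ‖x‖ ≤ ‖(t : ℂ) * Complex.exp (θ * Complex.I)‖ + ρ := by
            have := mem_closedBall.mp hx
            rw [dist_eq_norm] at this
            calc ‖x‖ ≤ ‖(t : ℂ) * Complex.exp (θ * Complex.I)‖ +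
                ‖x - (t : ℂ) * Complex.exp (θ * Complex.I)‖ := norm_le_insert' _ _
              _ ≤ ‖(t : ℂ) * Complex.exp (θ * Complex.I)‖ + ρ := by linarith
        _ = t + ρ := by rw [norm_te θ ht]
    have := Real.exp_le_exp.mpr (mul_le_mul_of_nonneg_left hx' hB.le)
    gcongr
  refine h1.trans (le_of_eq ?_)
  rw [mul_add B t ρ, Real.exp_add]
  ring

lemma norm_e (θ : ℝ) : ‖Complex.exp (θ * Complex.I)‖ = 1 := by
  rw [Complex.norm_exp_ofReal_mul_I]

lemma integral_exp_neg' {b : ℝ} (hb : 0 < b) :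
    ∫ t in Ioi (0:ℝ), Real.exp (-b * t) = 1 / b := by
  have hderiv : ∀ t ∈ Ici (0:ℝ), HasDerivAt (fun t => -Real.exp (-b * t) / b)
      (Real.exp (-b * t)) t := by
    intro t _
    have h1 : HasDerivAt (fun t : ℝ => -b * t) (-b) t := by
      simpa using (hasDerivAt_id t).const_mul (-b)
    have h2 := (h1.exp.neg).div_const b
    convert h2 using 1
    · rfl
    · rfl
    · rfl
    field_simp
  have htend : Tendsto (fun t => -Real.exp (-b * t) / b) atTop (nhds 0) := by
    have h3 : Tendsto (fun t : ℝ => -b * t) atTop atBot :=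
      tendsto_id.const_mul_atTop_of_neg (by linarith)
    have := (Real.tendsto_exp_atBot.comp h3).neg.div_const b
    simpa using this
  have := integral_Ioi_of_hasDerivAt_of_tendsto' hderiv (exp_neg_integrableOn_Ioi 0 hb) htend
  rw [this]
  simp [div_eq_mul_inv]

include hF hbound hA hB in
lemma point_bound {ρ : ℝ} (hρ : 0 < ρ) (hρr : ρ < r) (n : ℕ) (z : ℂ) {t : ℝ} (ht : 0 ≤ t) :
    ‖iteratedDeriv n F ((t : ℂ) * Complex.exp (θ * Complex.I)) *
      Complex.exp (-z * ((t : ℂ) * Complex.exp (θ * Complex.I))) * Complex.exp (θ * Complex.I)‖ ≤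
    ((Nat.factorial n : ℝ) * (A * Real.exp (B * ρ)) / ρ ^ n) *
      Real.exp (-((z * Complex.exp (θ * Complex.I)).re - B) * t) := by
  rw [norm_mul, norm_mul, norm_exp_neg, norm_e θ, mul_one]
  have h1 := Dbound hA hB hF hbound hρ hρr n ht
  calc ‖iteratedDeriv n F ((t : ℂ) * Complex.exp (θ * Complex.I))‖ *
        Real.exp (-((z * Complex.exp (θ * Complex.I)).re * t))
      ≤ ((Nat.factorial n : ℝ) * (A * Real.exp (B * ρ)) / ρ ^ n) * Real.exp (B * t) *
        Real.exp (-((z * Complex.exp (θ * Complex.I)).re * t)) := by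
        exact mul_le_mul_of_nonneg_right h1 (Real.exp_pos _).le
    _ = ((Nat.factorial n : ℝ) * (A * Real.exp (B * ρ)) / ρ ^ n) *
        Real.exp (-((z * Complex.exp (θ * Complex.I)).re - B) * t) := by
        rw [mul_assoc, ← Real.exp_add]
        ring_nf

include hr hF in
lemma contOn (n : ℕ) (z : ℂ) :
    ContinuousOn (fun t : ℝ => iteratedDeriv n F ((t : ℂ) * Complex.exp (θ * Complex.I)) *
      Complex.exp (-z * ((t : ℂ) * Complex.exp (θ * Complex.I))) * Complex.exp (θ * Complex.I))
      (Ici 0) := by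
  have hmap : Continuous (fun t : ℝ => (t : ℂ) * Complex.exp (θ * Complex.I)) := by
    exact (Complex.continuous_ofReal.mul continuous_const)
  have h1 : ContinuousOn (fun t : ℝ =>
      iteratedDeriv n F ((t : ℂ) * Complex.exp (θ * Complex.I))) (Ici 0) := by
    refine ((Danalytic hr hF n).continuousOn).comp hmap.continuousOn ?_
    intro t ht
    exact ray_mem hr ht
  refine (h1.mul ?_).mul continuousOn_const
  exact (Complex.continuous_exp.comp (continuous_const.mul hmap)).continuousOn

include hr hA hB hF hbound in
lemma In_integrable (n : ℕ) {z : ℂ} (hz : B < (z * Complex.exp (θ * Complex.I)).re) :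
    IntegrableOn (fun t : ℝ => iteratedDeriv n F ((t : ℂ) * Complex.exp (θ * Complex.I)) *
      Complex.exp (-z * ((t : ℂ) * Complex.exp (θ * Complex.I))) * Complex.exp (θ * Complex.I))
      (Ioi (0:ℝ)) := by
  set c := (z * Complex.exp (θ * Complex.I)).re
  refine Integrable.mono' (g := fun t =>
    ((Nat.factorial n : ℝ) * (A * Real.exp (B * (r/2))) / (r/2) ^ n) * Real.exp (-(c - B) * t))
    ((exp_neg_integrableOn_Ioi 0 (by linarith : (0:ℝ) < c - B)).const_mul _)
    (((contOn hr hF n z).mono Ioi_subset_Ici_self).aestronglyMeasurable measurableSet_Ioi) ?_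
  filter_upwards [ae_restrict_mem measurableSet_Ioi] with t ht
  exact point_bound hA hB hF hbound (by linarith) (by linarith) n z (le_of_lt ht)

include hr hA hB hF hbound in
lemma ibp_step (n : ℕ) {z : ℂ} (hz : B < (z * Complex.exp (θ * Complex.I)).re)
    (hcoeff : iteratedDeriv n F 0 = a (n + 1)) :
    z * ∫ t in Ioi (0:ℝ), iteratedDeriv n F ((t : ℂ) * Complex.exp (θ * Complex.I)) *
        Complex.exp (-z * ((t : ℂ) * Complex.exp (θ * Complex.I))) * Complex.exp (θ * Complex.I)
    = a (n + 1) + ∫ t in Ioi (0:ℝ), iteratedDeriv (n+1) F ((t : ℂ) * Complex.exp (θ * Complex.I)) *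
        Complex.exp (-z * ((t : ℂ) * Complex.exp (θ * Complex.I))) * Complex.exp (θ * Complex.I) := by
  set e := Complex.exp (θ * Complex.I) with he
  set c := (z * e).re with hc
  set φ : ℝ → ℂ := fun t => iteratedDeriv n F ((t:ℂ) * e) * Complex.exp (-z * ((t:ℂ) * e)) with hφ
  set f' : ℝ → ℂ := fun t => iteratedDeriv (n+1) F ((t:ℂ) * e) *
      Complex.exp (-z * ((t:ℂ) * e)) * e +
      (-z) * (iteratedDeriv n F ((t:ℂ) * e) * Complex.exp (-z * ((t:ℂ) * e)) * e) with hf'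
  have hderiv : ∀ t ∈ Ici (0:ℝ), HasDerivAt φ (f' t) t := by
    intro t ht
    have hmem : (t:ℂ) * e ∈ borelStrip r θ := ray_mem hr ht
    have hmul : HasDerivAt (fun ζ : ℂ => ζ * e) e (t:ℂ) := by
      simpa using (hasDerivAt_id (t:ℂ)).mul_const e
    have hDn : HasDerivAt (iteratedDeriv n F) (iteratedDeriv (n+1) F ((t:ℂ) * e)) ((t:ℂ) * e) := by
      have h := ((Danalytic hr hF n) _ hmem).differentiableAt.hasDerivAt
      rwa [← iteratedDeriv_succ] at h
    have h1 : HasDerivAt (fun ζ : ℂ => iteratedDeriv n F (ζ * e))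
        (iteratedDeriv (n+1) F ((t:ℂ) * e) * e) (t:ℂ) := by
      have := HasDerivAt.comp ((t:ℂ) : ℂ) hDn hmul; exact this
    have hinner : HasDerivAt (fun ζ : ℂ => -z * (ζ * e)) (-z * e) (t:ℂ) := by
      simpa [mul_comm, mul_assoc] using ((hasDerivAt_id (t:ℂ)).mul_const e).const_mul (-z)
    have h2 : HasDerivAt (fun ζ : ℂ => Complex.exp (-z * (ζ * e)))
        (Complex.exp (-z * ((t:ℂ) * e)) * (-z * e)) (t:ℂ) := hinner.cexp
    have hψ := (h1.mul h2).comp_ofReal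
    convert hψ using 1
    · rfl
    simp only [hf']
    ring
  have hint : IntegrableOn f' (Ioi (0:ℝ)) := by
    exact (In_integrable hr hA hB hF hbound (n+1) hz).add
      ((In_integrable hr hA hB hF hbound n hz).const_mul (-z))
  have htend : Tendsto φ atTop (nhds 0) := by
    set C := ((Nat.factorial n : ℝ) * (A * Real.exp (B * (r/2))) / (r/2) ^ n) with hC
    have hb : Tendsto (fun t : ℝ => C * Real.exp (-(c - B) * t)) atTop (nhds 0) := by
      have h3 : Tendsto (fun t : ℝ => -(c - B) * t) atTop atBot :=
        tendsto_id.const_mul_atTop_of_neg (by simp only [hc]; linarith)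
      have := (Real.tendsto_exp_atBot.comp h3).const_mul C
      simpa using this
    refine squeeze_zero_norm' ?_ hb
    filter_upwards [eventually_ge_atTop (0:ℝ)] with t ht
    have := point_bound hA hB hF hbound (by linarith : (0:ℝ) < r/2) (by linarith) n z ht
    calc ‖φ t‖ = ‖iteratedDeriv n F ((t:ℂ) * e) * Complex.exp (-z * ((t:ℂ) * e)) * e‖ := by
          rw [norm_mul (iteratedDeriv n F ((t:ℂ) * e) * Complex.exp (-z * ((t:ℂ) * e))) e,
            norm_e θ, mul_one]
      _ ≤ C * Real.exp (-(c - B) * t) := this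
  have hFTC := integral_Ioi_of_hasDerivAt_of_tendsto' hderiv hint htend
  have hφ0 : φ 0 = a (n + 1) := by
    simp only [hφ, Complex.ofReal_zero, zero_mul, mul_zero, neg_zero, Complex.exp_zero, mul_one]
    exact hcoeff
  rw [hφ0] at hFTC
  have hsplit : ∫ t in Ioi (0:ℝ), f' t =
      (∫ t in Ioi (0:ℝ), iteratedDeriv (n+1) F ((t:ℂ) * e) *
        Complex.exp (-z * ((t:ℂ) * e)) * e) +
      (-z) * ∫ t in Ioi (0:ℝ), iteratedDeriv n F ((t:ℂ) * e) *
        Complex.exp (-z * ((t:ℂ) * e)) * e := by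
    have hsm := MeasureTheory.integral_smul (μ := volume.restrict (Ioi (0:ℝ))) (-z)
      (fun t : ℝ => iteratedDeriv n F ((t:ℂ) * e) * Complex.exp (-z * ((t:ℂ) * e)) * e)
    simp only [smul_eq_mul] at hsm
    rw [integral_add (In_integrable hr hA hB hF hbound (n+1) hz)
      ((In_integrable hr hA hB hF hbound n hz).const_mul (-z)), hsm]
  rw [hsplit] at hFTC
  have : (0:ℂ) - a (n+1) = - a (n+1) := by ring
  rw [this] at hFTC
  linear_combination -hFTC

include hr hA hB hF hbound in
lemma expansion (hcoeff : ∀ m, iteratedDeriv m F 0 = a (m + 1)) {z : ℂ}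
    (hz : B < (z * Complex.exp (θ * Complex.I)).re) (hzne : z ≠ 0) (n : ℕ) :
    a 0 + (∫ t in Ioi (0:ℝ), iteratedDeriv 0 F ((t : ℂ) * Complex.exp (θ * Complex.I)) *
        Complex.exp (-z * ((t : ℂ) * Complex.exp (θ * Complex.I))) * Complex.exp (θ * Complex.I))
    = (∑ k ∈ Finset.range (n + 1), a k / z ^ k) +
      (∫ t in Ioi (0:ℝ), iteratedDeriv n F ((t : ℂ) * Complex.exp (θ * Complex.I)) *
        Complex.exp (-z * ((t : ℂ) * Complex.exp (θ * Complex.I))) * Complex.exp (θ * Complex.I))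
        / z ^ n := by
  induction n with
  | zero => simp
  | succ n ih =>
      rw [ih]
      have hstep := ibp_step hr hA hB hF hbound n hz (hcoeff n)
      set In := (∫ t in Ioi (0:ℝ), iteratedDeriv n F ((t : ℂ) * Complex.exp (θ * Complex.I)) *
        Complex.exp (-z * ((t : ℂ) * Complex.exp (θ * Complex.I))) *
        Complex.exp (θ * Complex.I)) with hIn
      set In1 := (∫ t in Ioi (0:ℝ),
        iteratedDeriv (n+1) F ((t : ℂ) * Complex.exp (θ * Complex.I)) *
        Complex.exp (-z * ((t : ℂ) * Complex.exp (θ * Complex.I))) *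
        Complex.exp (θ * Complex.I)) with hIn1
      have hzn : z ^ n ≠ 0 := pow_ne_zero _ hzne
      have key : In / z ^ n = a (n+1) / z ^ (n+1) + In1 / z ^ (n+1) := by
        rw [pow_succ]
        field_simp
        linear_combination hstep
      rw [key, Finset.sum_range_succ _ (n+1)]
      ring

include hr hA hB hF hbound in
lemma In_le {ρ : ℝ} (hρ : 0 < ρ) (hρr : ρ < r) (n : ℕ) {z : ℂ}
    (hz : B < (z * Complex.exp (θ * Complex.I)).re) :
    ‖∫ t in Ioi (0:ℝ), iteratedDeriv n F ((t : ℂ) * Complex.exp (θ * Complex.I)) *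
        Complex.exp (-z * ((t : ℂ) * Complex.exp (θ * Complex.I))) * Complex.exp (θ * Complex.I)‖
    ≤ ((Nat.factorial n : ℝ) * (A * Real.exp (B * ρ)) / ρ ^ n) *
      (1 / ((z * Complex.exp (θ * Complex.I)).re - B)) := by
  set c := (z * Complex.exp (θ * Complex.I)).re with hc
  set C := ((Nat.factorial n : ℝ) * (A * Real.exp (B * ρ)) / ρ ^ n) with hC
  have h1 : ‖∫ t in Ioi (0:ℝ), iteratedDeriv n F ((t : ℂ) * Complex.exp (θ * Complex.I)) *
      Complex.exp (-z * ((t : ℂ) * Complex.exp (θ * Complex.I))) * Complex.exp (θ * Complex.I)‖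
      ≤ ∫ t in Ioi (0:ℝ), C * Real.exp (-(c - B) * t) := by
    refine norm_integral_le_of_norm_le
      ((exp_neg_integrableOn_Ioi 0 (by linarith : (0:ℝ) < c - B)).const_mul _) ?_
    filter_upwards [ae_restrict_mem measurableSet_Ioi] with t ht
    exact point_bound hA hB hF hbound hρ hρr n z (le_of_lt ht)
  refine h1.trans (le_of_eq ?_)
  rw [MeasureTheory.integral_const_mul, integral_exp_neg' (by linarith : (0:ℝ) < c - B)]

include hr hA hB hF hbound in
lemma diffOn :
    DifferentiableOn ℂ
      (fun z : ℂ => a 0 + ∫ t in Ioi (0:ℝ),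
        F ((t : ℂ) * Complex.exp (θ * Complex.I)) *
          Complex.exp (-z * ((t : ℂ) * Complex.exp (θ * Complex.I))) * Complex.exp (θ * Complex.I))
      {z : ℂ | B < (z * Complex.exp (θ * Complex.I)).re} := by
  intro z₀ hz₀
  set e := Complex.exp (θ * Complex.I) with he
  have hz₀' : B < (z₀ * e).re := hz₀
  set c₀ := (z₀ * e).re with hc₀
  set ε := (c₀ - B) / 2 with hε
  have hεpos : 0 < ε := by simp only [hε]; linarith
  set G : ℂ → ℝ → ℂ := fun z t => F ((t:ℂ) * e) * Complex.exp (-z * ((t:ℂ) * e)) * e with hG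
  set G' : ℂ → ℝ → ℂ := fun z t =>
    F ((t:ℂ) * e) * (Complex.exp (-z * ((t:ℂ) * e)) * (-((t:ℂ) * e))) * e with hG'
  have hmeas : ∀ z : ℂ, AEStronglyMeasurable (G z) (volume.restrict (Ioi (0:ℝ))) := by
    intro z
    have hcont := contOn hr hF 0 z
    simp only [iteratedDeriv_zero] at hcont
    exact (hcont.mono Ioi_subset_Ici_self).aestronglyMeasurable measurableSet_Ioi
  have hmeas' : AEStronglyMeasurable (G' z₀) (volume.restrict (Ioi (0:ℝ))) := by
    have hcont := contOn hr hF 0 z₀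
    simp only [iteratedDeriv_zero] at hcont
    have hc2 : ContinuousOn (fun t : ℝ => -((t:ℂ) * e)) (Ici 0) :=
      ((Complex.continuous_ofReal.mul continuous_const).neg).continuousOn
    have : ContinuousOn (G' z₀) (Ici 0) := by
      have := (hcont.mul hc2)
      refine this.congr fun t ht => ?_
      simp only [hG', Pi.mul_apply]
      ring
    exact (this.mono Ioi_subset_Ici_self).aestronglyMeasurable measurableSet_Ioi
  have hGint : Integrable (G z₀) (volume.restrict (Ioi (0:ℝ))) := by
    have := In_integrable hr hA hB hF hbound 0 hz₀'
    simp only [iteratedDeriv_zero] at this; exact this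
  have hbnd : ∀ᵐ t ∂(volume.restrict (Ioi (0:ℝ))), ∀ z ∈ ball z₀ ε,
      ‖G' z t‖ ≤ (A * (2 / ε)) * Real.exp (-(ε / 2) * t) := by
    filter_upwards [ae_restrict_mem measurableSet_Ioi] with t ht z hz
    have ht0 : (0:ℝ) ≤ t := le_of_lt ht
    have hcz : B + ε ≤ (z * e).re := by
      have h1 : c₀ - (z * e).re ≤ ‖z₀ - z‖ := by
        have h2 : c₀ - (z * e).re = ((z₀ - z) * e).re := by
          simp [hc₀, Complex.sub_re, sub_mul]
        rw [h2]
        refine (Complex.re_le_norm _).trans ?_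
        rw [norm_mul, norm_e θ, mul_one]
      have h3 : ‖z₀ - z‖ < ε := by rw [norm_sub_rev]; exact mem_ball_iff_norm.mp hz
      simp only [hε] at *
      linarith
    have hFb := hbound _ (ray_mem hr ht0)
    rw [norm_te θ ht0] at hFb
    have hnorm : ‖G' z t‖ = ‖F ((t:ℂ) * e)‖ * (Real.exp (-((z * e).re * t)) * t) := by
      simp only [hG']
      rw [norm_mul, norm_mul, norm_mul, norm_neg, norm_e θ, mul_one, norm_exp_neg, norm_te θ ht0]
    rw [hnorm]
    calc ‖F ((t:ℂ) * e)‖ * (Real.exp (-((z * e).re * t)) * t)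
        ≤ (A * Real.exp (B * t)) * (Real.exp (-((B + ε) * t)) * t) := by
          have hmono : Real.exp (-((z * e).re * t)) ≤ Real.exp (-((B + ε) * t)) := by
            apply Real.exp_le_exp.mpr
            have := mul_le_mul_of_nonneg_right hcz ht0
            linarith
          have h4 : (0:ℝ) ≤ Real.exp (-((z * e).re * t)) * t := by positivity
          refine mul_le_mul hFb ?_ h4 (by positivity)
          exact mul_le_mul_of_nonneg_right hmono ht0
      _ = A * (t * Real.exp (-(ε * t))) := by
          have hh : Real.exp (B * t) * Real.exp (-((B + ε) * t)) = Real.exp (-(ε * t)) := by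
            rw [← Real.exp_add]; ring_nf
          linear_combination (A * t) * hh
      _ ≤ (A * (2 / ε)) * Real.exp (-(ε / 2) * t) := by
          have h5 : t ≤ (2 / ε) * Real.exp ((ε / 2) * t) := by
            have h6 : (ε / 2) * t ≤ Real.exp ((ε / 2) * t) :=
              (Real.add_one_le_exp _).trans' (by linarith)
            calc t = (2 / ε) * ((ε / 2) * t) := by field_simp
              _ ≤ (2 / ε) * Real.exp ((ε / 2) * t) := by
                  exact mul_le_mul_of_nonneg_left h6 (by positivity)
          calc A * (t * Real.exp (-(ε * t)))
              ≤ A * (((2 / ε) * Real.exp ((ε / 2) * t)) * Real.exp (-(ε * t))) := by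
                refine mul_le_mul_of_nonneg_left ?_ hA.le
                exact mul_le_mul_of_nonneg_right h5 (Real.exp_pos _).le
            _ = (A * (2 / ε)) * Real.exp (-(ε / 2) * t) := by
                have hh : Real.exp ((ε / 2) * t) * Real.exp (-(ε * t)) =
                    Real.exp (-(ε / 2) * t) := by
                  rw [← Real.exp_add]; ring_nf
                linear_combination (A * (2 / ε)) * hh
  have hbint : Integrable (fun t => (A * (2 / ε)) * Real.exp (-(ε / 2) * t))
      (volume.restrict (Ioi (0:ℝ))) :=
    (exp_neg_integrableOn_Ioi 0 (by positivity)).const_mul _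
  have hdiff : ∀ᵐ t ∂(volume.restrict (Ioi (0:ℝ))), ∀ z ∈ ball z₀ ε,
      HasDerivAt (fun z => G z t) (G' z t) z := by
    refine Eventually.of_forall fun t => fun z _ => ?_
    have hinner : HasDerivAt (fun z : ℂ => -z * ((t:ℂ) * e)) (-((t:ℂ) * e)) z := by
      simpa using ((hasDerivAt_id z).neg.mul_const ((t:ℂ) * e))
    exact ((hinner.cexp.const_mul (F ((t:ℂ) * e))).mul_const e)
  have key := hasDerivAt_integral_of_dominated_loc_of_deriv_le (ball_mem_nhds z₀ hεpos)
    (Eventually.of_forall hmeas) hGint hmeas' hbnd hbint hdiff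
  exact ((differentiableAt_const (a 0)).add key.2.differentiableAt).differentiableWithinAt

end main


theorem stmt_0 (a : ℕ → ℂ) (r θ A B : ℝ) (hr : 0 < r) (hA : 0 < A) (hB : 0 < B)
    (F : ℂ → ℂ)
    (hconv : ∃ ρ > 0, ∀ ζ : ℂ, ‖ζ‖ < ρ →
      HasSum (fun n : ℕ => a (n + 1) * ζ ^ n / (Nat.factorial n : ℂ)) (F ζ))
    (hF : DifferentiableOn ℂ F (borelStrip r θ))
    (hbound : ∀ ζ ∈ borelStrip r θ, ‖F ζ‖ ≤ A * Real.exp (B * ‖ζ‖)) :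
    (∀ z : ℂ, B < (z * Complex.exp (θ * Complex.I)).re →
      IntegrableOn (fun t : ℝ => F ((t : ℂ) * Complex.exp (θ * Complex.I)) *
        Complex.exp (-z * ((t : ℂ) * Complex.exp (θ * Complex.I))) *
        Complex.exp (θ * Complex.I)) (Set.Ioi (0:ℝ))) ∧
    DifferentiableOn ℂ
      (fun z : ℂ => a 0 + ∫ t in Set.Ioi (0:ℝ),
        F ((t : ℂ) * Complex.exp (θ * Complex.I)) *
          Complex.exp (-z * ((t : ℂ) * Complex.exp (θ * Complex.I))) * Complex.exp (θ * Complex.I))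
      {z : ℂ | B < (z * Complex.exp (θ * Complex.I)).re} ∧
    ∀ z : ℂ, B < (z * Complex.exp (θ * Complex.I)).re → ∀ n : ℕ,
      ‖(a 0 + ∫ t in Set.Ioi (0:ℝ),
          F ((t : ℂ) * Complex.exp (θ * Complex.I)) *
            Complex.exp (-z * ((t : ℂ) * Complex.exp (θ * Complex.I))) *
              Complex.exp (θ * Complex.I))
        - ∑ k ∈ Finset.range (n + 1), a k / z ^ k‖ ≤
      A * Real.exp (B * r) * ((Nat.factorial n : ℝ) / r ^ n) *
        (1 / (‖z‖ ^ n * ((z * Complex.exp (θ * Complex.I)).re - B))) := by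
  refine ⟨?_, ?_, ?_⟩
  · intro z hz
    have := In_integrable hr hA hB hF hbound 0 hz
    simpa only [iteratedDeriv_zero] using this
  · exact diffOn hr hA hB hF hbound
  · intro z hz n
    have hcle : (z * Complex.exp (θ * Complex.I)).re ≤ ‖z‖ := by
      have h := Complex.re_le_norm (z * Complex.exp (θ * Complex.I))
      rwa [norm_mul, norm_e θ, mul_one] at h
    have hznorm : 0 < ‖z‖ := lt_of_lt_of_le (lt_trans hB hz) hcle
    have hzne : z ≠ 0 := norm_pos_iff.mp hznorm
    have hcoeff : ∀ m, iteratedDeriv m F 0 = a (m + 1) := coeff_eq a F hconv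
    have hexp := expansion hr hA hB hF hbound hcoeff hz hzne n
    simp only [iteratedDeriv_zero] at hexp
    rw [hexp, add_sub_cancel_left, norm_div, norm_pow]
    have hpow : 0 < ‖z‖ ^ n := pow_pos hznorm n
    set c := (z * Complex.exp (θ * Complex.I)).re with hcdef
    refine ge_of_tendsto (f := fun ρ : ℝ =>
      (((Nat.factorial n : ℝ) * (A * Real.exp (B * ρ)) / ρ ^ n) * (1 / (c - B))) / ‖z‖ ^ n)
      (x := nhdsWithin r (Iio r)) ?_ ?_
    · have hct : ContinuousAt (fun ρ : ℝ =>
          (((Nat.factorial n : ℝ) * (A * Real.exp (B * ρ)) / ρ ^ n) * (1 / (c - B))) / ‖z‖ ^ n)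
          r := by
        have h1 : ContinuousAt (fun ρ : ℝ => (Nat.factorial n : ℝ) * (A * Real.exp (B * ρ))) r := by
          apply Continuous.continuousAt
          continuity
        have h2 : ContinuousAt (fun ρ : ℝ => ρ ^ n) r := (continuous_pow n).continuousAt
        exact ((h1.div h2 (pow_ne_zero _ hr.ne')).mul continuousAt_const).div_const _
      have htd := hct.tendsto.mono_left (nhdsWithin_le_nhds (s := Iio r))
      convert htd using 2
      have hcB : c - B ≠ 0 := by have : B < c := hz; intro h; linarith [sub_eq_zero.mp h]
      field_simp
    · filter_upwards [Ioo_mem_nhdsLT_of_mem (⟨hr, le_rfl⟩ : r ∈ Ioc 0 r)] with ρ hρ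
      have hle := In_le hr hA hB hF hbound hρ.1 hρ.2 n hz
      exact (div_le_div_iff_of_pos_right hpow).mpr hle
end

section
/- Let D(1,1) ⊂ ℂ be the open disk of center 1 and radius 1, and let Δ = {−Log s : s ∈ D(1,1)} be its image under the principal branch of −log. Then B_{ln 2} ⊆ Δ ⊆ B_{π/2}, where for r>0, B_r denotes the open strip {ζ∈ℂ : dist(ζ, [0,∞)) < r}. -/
open Complex Real Metric Set

/-- The open strip of width `r` around the positive real axis:
`B_r = {ζ ∈ ℂ : dist(ζ, [0,∞)) < r}`. -/
noncomputable def borelStrip0 (r : ℝ) : Set ℂ :=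
  {ζ : ℂ | Metric.infDist ζ (Complex.ofReal '' Set.Ici 0) < r}

/-- `Δ`, the image of the open disk `D(1,1)` under `s ↦ -Log s`. -/
noncomputable def borelDelta : Set ℂ :=
  (fun s : ℂ => -Complex.log s) '' Metric.ball (1 : ℂ) 1

lemma aux_exp_lt {a b : ℝ} (ha : 0 ≤ a) (hb : 0 ≤ b)
    (h : a ^ 2 + b ^ 2 < Real.log 2 ^ 2) : Real.exp a < 2 - b ^ 2 := by
  have hlt : Real.log 2 < 0.6931471808 := Real.log_two_lt_d9
  have hgt : (0.6931471803 : ℝ) < Real.log 2 := Real.log_two_gt_d9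
  set r := Real.log 2 with hr
  have hb2 : b ^ 2 < 1 / 2 := by nlinarith [sq_nonneg a]
  have hc : 0 < r - 2 / 3 * b ^ 2 := by nlinarith
  have ha2 : a ^ 2 < (r - 2 / 3 * b ^ 2) ^ 2 := by nlinarith [sq_nonneg b]
  have haa : a < r - 2 / 3 * b ^ 2 := lt_of_pow_lt_pow_left₀ 2 hc.le ha2
  have h1 : Real.exp a < Real.exp r * Real.exp (-(2 / 3 * b ^ 2)) := by
    rw [← Real.exp_add]
    exact Real.exp_lt_exp.2 (by linarith)
  have h2 : Real.exp r = 2 := Real.exp_log two_pos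
  set E := Real.exp (-(2 / 3 * b ^ 2)) with hE
  have hEpos : 0 < E := Real.exp_pos _
  have hE1 : E * (1 + 2 / 3 * b ^ 2) ≤ 1 := by
    have := Real.add_one_le_exp (2 / 3 * b ^ 2)
    calc E * (1 + 2 / 3 * b ^ 2) ≤ E * Real.exp (2 / 3 * b ^ 2) := by
          apply mul_le_mul_of_nonneg_left _ hEpos.le
          linarith
      _ = 1 := by rw [hE, ← Real.exp_add]; simp
  have key : 2 * E ≤ 2 - b ^ 2 := by
    have h3 : (2 - b ^ 2) * (1 + 2 / 3 * b ^ 2) ≥ 2 := by nlinarith [sq_nonneg b]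
    nlinarith [sq_nonneg b]
  calc Real.exp a < Real.exp r * E := h1
    _ = 2 * E := by rw [h2]
    _ ≤ 2 - b ^ 2 := key

theorem stmt_3 :
    borelStrip0 (Real.log 2) ⊆ borelDelta ∧ borelDelta ⊆ borelStrip0 (Real.pi / 2) := by
  constructor
  · -- B_{log 2} ⊆ Δ
    intro ζ hζ
    obtain ⟨w, hw, hdist⟩ := (Metric.infDist_lt_iff
      (by exact ⟨0, mem_image_of_mem _ Set.self_mem_Ici⟩)).1 hζ
    obtain ⟨t, ht, rfl⟩ := hw
    set x := ζ.re with hx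
    set y := ζ.im with hy
    have hab : (x - t) ^ 2 + y ^ 2 < Real.log 2 ^ 2 := by
      have h1 : dist ζ (t : ℂ) ^ 2 = (x - t) ^ 2 + y ^ 2 := by
        rw [Complex.dist_eq, Complex.sq_norm, Complex.normSq_apply]
        simp only [Complex.sub_re, Complex.sub_im, Complex.ofReal_re, Complex.ofReal_im,
          ← hx, ← hy]
        ring
      have h2 : dist ζ (t : ℂ) ^ 2 < Real.log 2 ^ 2 := by
        exact pow_lt_pow_left₀ hdist dist_nonneg (by norm_num)
      linarith [h1 ▸ h2]
    have habs : |x - t| ^ 2 + |y| ^ 2 < Real.log 2 ^ 2 := by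
      rwa [_root_.sq_abs, _root_.sq_abs]
    have hkey : Real.exp (|x - t|) < 2 - |y| ^ 2 :=
      aux_exp_lt (abs_nonneg _) (abs_nonneg _) habs
    have hy2 : |y| ^ 2 < Real.log 2 ^ 2 := by nlinarith [sq_nonneg (|x - t|)]
    have hylt : |y| < Real.log 2 := by
      exact lt_of_pow_lt_pow_left₀ 2 (Real.log_nonneg one_le_two) hy2
    have hypi : |y| < Real.pi := by
      have := Real.log_two_lt_d9
      have := Real.pi_gt_three
      linarith
    -- main inequality : exp (-x) < 2 * cos y
    have hmain : Real.exp (-x) < 2 * Real.cos y := by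
      have h1 : Real.exp (-x) ≤ Real.exp (|x - t|) := by
        apply Real.exp_le_exp.2
        have : -x ≤ |x - t| := by
          have h := neg_abs_le (x - t)
          have : t ∈ Set.Ici (0:ℝ) := ht
          simp only [Set.mem_Ici] at this
          cases abs_cases (x - t) with
          | inl h' => linarith [h'.1]
          | inr h' => linarith [h'.1]
        linarith
      have h2 : 2 - |y| ^ 2 ≤ 2 * Real.cos y := by
        have := Real.one_sub_sq_div_two_le_cos (x := y)
        have hyy : Real.cos y = Real.cos |y| := (Real.cos_abs y).symm
        nlinarith [_root_.sq_abs y]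
      linarith
    refine ⟨Complex.exp (-ζ), ?_, ?_⟩
    · -- exp (-ζ) ∈ ball 1 1
      rw [Metric.mem_ball, Complex.dist_eq]
      have hsq : ‖Complex.exp (-ζ) - 1‖ ^ 2 < 1 := by
        rw [Complex.sq_norm, Complex.normSq_apply]
        have hre : (Complex.exp (-ζ) - 1).re = Real.exp (-x) * Real.cos y - 1 := by
          simp [Complex.exp_re, hx, hy, Real.cos_neg]
        have him : (Complex.exp (-ζ) - 1).im = Real.exp (-x) * (-Real.sin y) := by
          simp [Complex.exp_im, hx, hy, Real.sin_neg]
        rw [hre, him]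
        have hs := Real.sin_sq_add_cos_sq y
        have hexp : 0 < Real.exp (-x) := Real.exp_pos _
        nlinarith [hs, hexp, mul_lt_mul_of_pos_left hmain hexp]
      have h1 : ‖Complex.exp (-ζ) - 1‖ ^ 2 < 1 ^ 2 := by simpa using hsq
      exact lt_of_pow_lt_pow_left₀ 2 zero_le_one h1
    · -- -log (exp (-ζ)) = ζ
      have : Complex.log (Complex.exp (-ζ)) = -ζ := by
        apply Complex.log_exp
        · simp only [Complex.neg_im]
          have := abs_lt.1 hypi
          linarith [this.2]
        · simp only [Complex.neg_im]
          have := abs_lt.1 hypi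
          linarith [this.1]
      simp [this]
  · -- Δ ⊆ B_{π/2}
    intro ζ hζ
    obtain ⟨s, hs, rfl⟩ := hζ
    rw [Metric.mem_ball, Complex.dist_eq] at hs
    have hs0 : s ≠ 0 := by
      intro h
      rw [h] at hs
      simp at hs
    have hsre : 0 < s.re := by
      have h1 : ‖s - 1‖ ^ 2 < 1 := by nlinarith [norm_nonneg (s - 1)]
      rw [Complex.sq_norm, Complex.normSq_apply] at h1
      simp only [Complex.sub_re, Complex.sub_im, Complex.one_re, Complex.one_im] at h1
      nlinarith [sq_nonneg s.im]
    have harg : |Complex.arg s| < Real.pi / 2 :=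
      Complex.abs_arg_lt_pi_div_two_iff.2 (Or.inl hsre)
    have hρ : ‖s‖ < 2 := by
      calc ‖s‖ = ‖s - 1 + 1‖ := by ring_nf
        _ ≤ ‖s - 1‖ + ‖1‖ := norm_add_le _ _
        _ < 2 := by simp at hs ⊢; linarith
    have hρ0 : 0 < ‖s‖ := norm_pos_iff.mpr hs0
    simp only [borelStrip0, Set.mem_setOf_eq]
    have hre : (-Complex.log s).re = -Real.log (‖s‖) := by
      simp [Complex.log_re]
    have him : (-Complex.log s).im = -Complex.arg s := by
      simp [Complex.log_im]
    by_cases hρ1 : ‖s‖ ≤ 1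
    · -- use the point -log |s| ≥ 0
      have hlog : Real.log (‖s‖) ≤ 0 := Real.log_nonpos hρ0.le hρ1
      have hmem : ((-Real.log (‖s‖) : ℝ) : ℂ) ∈ Complex.ofReal '' Set.Ici 0 :=
        mem_image_of_mem _ (by simp [Set.mem_Ici]; linarith)
      calc Metric.infDist (-Complex.log s) (Complex.ofReal '' Set.Ici 0)
          ≤ dist (-Complex.log s) ((-Real.log (‖s‖) : ℝ) : ℂ) :=
            Metric.infDist_le_dist_of_mem hmem
        _ = |Complex.arg s| := by
            rw [Complex.dist_eq]
            have h1 : (-Complex.log s - ((-Real.log (‖s‖) : ℝ) : ℂ)).re = 0 := by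
              simp [Complex.log_re]
            have h2 : (-Complex.log s - ((-Real.log (‖s‖) : ℝ) : ℂ)).im
                = -Complex.arg s := by simp [Complex.log_im]
            rw [Complex.norm_def, Complex.normSq_apply, h1, h2]
            rw [show (0:ℝ) * 0 + -Complex.arg s * -Complex.arg s = Complex.arg s ^ 2 by ring,
              Real.sqrt_sq_eq_abs]
        _ < Real.pi / 2 := harg
    · -- |s| > 1 : use the point 0
      push_neg at hρ1
      have hcos : ‖s‖ / 2 < Real.cos (Complex.arg s) := by
        have hre2 : s.re = ‖s‖ * Real.cos (Complex.arg s) := by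
          rw [Complex.cos_arg hs0]; field_simp
        have h1 : ‖s - 1‖ ^ 2 < 1 := by nlinarith [norm_nonneg (s - 1)]
        rw [Complex.sq_norm, Complex.normSq_apply] at h1
        simp only [Complex.sub_re, Complex.sub_im, Complex.one_re, Complex.one_im] at h1
        have habs2 : s.re ^ 2 + s.im ^ 2 = ‖s‖ ^ 2 := by
          rw [Complex.sq_norm, Complex.normSq_apply]; ring
        -- s.re > |s|^2 / 2
        have h2 : ‖s‖ ^ 2 / 2 < s.re := by nlinarith
        rw [hre2] at h2
        nlinarith
      have hcoshalf : (1 : ℝ) / 2 < Real.cos (Complex.arg s) := by nlinarith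
      have hargthird : |Complex.arg s| < Real.pi / 3 := by
        by_contra hcon
        push_neg at hcon
        have h1 : Real.cos (Complex.arg s) = Real.cos |Complex.arg s| :=
          (Real.cos_abs _).symm
        have h2 : Real.cos |Complex.arg s| ≤ Real.cos (Real.pi / 3) := by
          apply Real.cos_le_cos_of_nonneg_of_le_pi (by positivity) _ hcon
          have := Real.pi_pos
          linarith
        rw [Real.cos_pi_div_three] at h2
        rw [h1] at hcoshalf
        linarith
      have hlogpos : 0 < Real.log (‖s‖) := Real.log_pos hρ1
      have hloglt : Real.log (‖s‖) < Real.log 2 := Real.log_lt_log hρ0 hρ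
      have hmem : ((0 : ℝ) : ℂ) ∈ Complex.ofReal '' Set.Ici 0 :=
        mem_image_of_mem _ Set.self_mem_Ici
      calc Metric.infDist (-Complex.log s) (Complex.ofReal '' Set.Ici 0)
          ≤ dist (-Complex.log s) ((0 : ℝ) : ℂ) := Metric.infDist_le_dist_of_mem hmem
        _ = ‖Complex.log s‖ := by
            rw [Complex.dist_eq]; simp
        _ < Real.pi / 2 := by
            have hsq : ‖Complex.log s‖ ^ 2 < (Real.pi / 2) ^ 2 := by
              rw [Complex.sq_norm, Complex.normSq_apply, Complex.log_re, Complex.log_im]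
              have h1 : Complex.arg s ^ 2 < (Real.pi / 3) ^ 2 := by
                have h := pow_lt_pow_left₀ hargthird (abs_nonneg _) (two_ne_zero)
                rwa [_root_.sq_abs] at h
              have h2 : Real.log (‖s‖) ^ 2 < Real.log 2 ^ 2 := by
                nlinarith
              have hnum : Real.log 2 ^ 2 + (Real.pi / 3) ^ 2 ≤ (Real.pi / 2) ^ 2 := by
                have := Real.log_two_lt_d9
                have := Real.pi_gt_three
                nlinarith [Real.log_nonneg (one_le_two (α := ℝ))]
              nlinarith
            have := Real.pi_pos
            exact lt_of_pow_lt_pow_left₀ 2 (by positivity) hsq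
end

section
/- Let f̃ be a holomorphic function on Δ and suppose there exist A>0 and B>0 such that |f̃(ζ)| ≤ A·e^{B|ζ|} for all ζ ∈ Δ. Define φ(s) = f̃(−Log s) for s ∈ D(1,1), and let (b_n)_{n≥0} be the Taylor coefficients of φ at 1, i.e. φ(s) = ∑_{n≥0} b_n (1−s)^n for s ∈ D(1,1). Then for every real C > max(B,1), the series ∑_{n≥1} |b_n|/n^C converges. -/
open Complex Real Metric Set

lemma lemA (r θ : ℝ) (hr : 1/2 ≤ r) (hr1 : r < 1) (hθ : |θ - π| ≤ π) :
    ((1 - r) + |θ - π|) / π ≤ ‖(1 : ℂ) + (r : ℂ) * Complex.exp (θ * Complex.I)‖ := by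
  have hπ := Real.pi_gt_three
  have hπ2 : (9:ℝ) < π ^ 2 := by nlinarith
  set u := θ - π with hu
  have hcos : Real.cos θ = - Real.cos u := by
    have : θ = u + π := by ring
    rw [this, Real.cos_add_pi]
  have hcu : Real.cos u ≤ 1 - 2 / π ^ 2 * u ^ 2 := Real.cos_le_one_sub_mul_cos_sq hθ
  have hcu' : π ^ 2 * Real.cos u ≤ π ^ 2 - 2 * u ^ 2 := by
    have h := mul_le_mul_of_nonneg_left hcu (by positivity : (0:ℝ) ≤ π ^ 2)
    have h2 : π ^ 2 * (2 / π ^ 2 * u ^ 2) = 2 * u ^ 2 := by field_simp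
    rw [mul_sub, h2, mul_one] at h
    exact h
  have hnorm : ‖(1 : ℂ) + (r : ℂ) * Complex.exp (θ * Complex.I)‖ ^ 2
      = 1 + 2 * r * Real.cos θ + r ^ 2 := by
    rw [Complex.sq_norm]
    simp [Complex.normSq_apply, Complex.exp_mul_I, Complex.add_re, Complex.add_im,
      Complex.cos_ofReal_re, Complex.sin_ofReal_re]
    nlinarith [Real.sin_sq_add_cos_sq θ]
  have h1 : 0 ≤ ((1 - r) + |u|) / π :=
    div_nonneg (by linarith [abs_nonneg u]) (by positivity)
  have h2 : (((1 - r) + |u|) / π) ^ 2 ≤ ‖(1 : ℂ) + (r : ℂ) * Complex.exp (θ * Complex.I)‖ ^ 2 := by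
    rw [hnorm, hcos, div_pow]
    rw [div_le_iff₀ (by positivity)]
    have key : π ^ 2 * (1 - r) ^ 2 + 4 * r * u ^ 2 ≤ (1 + 2 * r * (-Real.cos u) + r ^ 2) * π ^ 2 := by
      nlinarith [mul_le_mul_of_nonneg_left hcu' (by linarith : (0:ℝ) ≤ 2 * r)]
    nlinarith [_root_.sq_abs u, abs_nonneg u, sq_nonneg (1 - r - |u|), sq_nonneg u,
      sq_nonneg (1 - r), key]
  nlinarith [norm_nonneg ((1 : ℂ) + (r : ℂ) * Complex.exp (θ * Complex.I))]

lemma lemB (B' ε : ℝ) (hB' : 1 < B') (hε : 0 < ε) :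
    ∫ θ in (0:ℝ)..(2*π), (ε + |θ - π|) ^ (-B') ≤ 2 / (B' - 1) * ε ^ (1 - B') := by
  have hπ := Real.pi_pos
  have hcont : Continuous fun θ : ℝ => (ε + |θ - π|) ^ (-B') := by
    apply Continuous.rpow_const
    · exact continuous_const.add (continuous_abs.comp (continuous_id.sub continuous_const))
    · intro x; left; positivity
  have hJbound : ∫ x in (0:ℝ)..π, (ε + x) ^ (-B') ≤ ε ^ (1 - B') / (B' - 1) := by
    have hcomp : (∫ x in (0:ℝ)..π, (ε + x) ^ (-B')) = ∫ y in ε..(π + ε), y ^ (-B') := by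
      have := intervalIntegral.integral_comp_add_right (a := (0:ℝ)) (b := π)
        (fun y : ℝ => y ^ (-B')) ε
      simpa [add_comm] using this
    rw [hcomp, integral_rpow (Or.inr ⟨by intro h; linarith,
      by simp [Set.uIcc_of_le (by linarith : ε ≤ π + ε)]; intro h; nlinarith⟩)]
    rw [show -B' + 1 = -(B' - 1) by ring, show (1 : ℝ) - B' = -(B' - 1) by ring,
      div_neg, ← neg_div, neg_sub]
    rw [div_le_div_iff_of_pos_right (by linarith)]
    exact sub_le_self _ (Real.rpow_nonneg (by linarith) _)
  have hi1 : IntervalIntegrable (fun θ : ℝ => (ε + |θ - π|) ^ (-B')) MeasureTheory.volume 0 π :=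
    hcont.intervalIntegrable _ _
  have hi2 : IntervalIntegrable (fun θ : ℝ => (ε + |θ - π|) ^ (-B')) MeasureTheory.volume π (2*π) :=
    hcont.intervalIntegrable _ _
  rw [← intervalIntegral.integral_add_adjacent_intervals hi1 hi2]
  have e1 : (∫ θ in (0:ℝ)..π, (ε + |θ - π|) ^ (-B')) = ∫ x in (0:ℝ)..π, (ε + x) ^ (-B') := by
    rw [show (∫ θ in (0:ℝ)..π, (ε + |θ - π|) ^ (-B'))
        = ∫ θ in (0:ℝ)..π, (fun x : ℝ => (ε + x) ^ (-B')) (π - θ) from ?_]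
    · rw [intervalIntegral.integral_comp_sub_left (fun x : ℝ => (ε + x) ^ (-B')) π]
      norm_num
    · apply intervalIntegral.integral_congr
      intro θ hθ
      rw [Set.uIcc_of_le (by linarith : (0:ℝ) ≤ π)] at hθ
      have : |θ - π| = π - θ := by
        rw [abs_of_nonpos (by linarith [hθ.2])]; ring
      simp [this]
  have e2 : (∫ θ in π..(2*π), (ε + |θ - π|) ^ (-B')) = ∫ x in (0:ℝ)..π, (ε + x) ^ (-B') := by
    rw [show (∫ θ in π..(2*π), (ε + |θ - π|) ^ (-B'))
        = ∫ θ in π..(2*π), (fun x : ℝ => (ε + x) ^ (-B')) (θ - π) from ?_]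
    · rw [intervalIntegral.integral_comp_sub_right (fun x : ℝ => (ε + x) ^ (-B')) π]
      have h1 : π - π = (0:ℝ) := by ring
      have h2 : 2*π - π = π := by ring
      rw [h1, h2]
    · apply intervalIntegral.integral_congr
      intro θ hθ
      rw [Set.uIcc_of_le (by linarith : π ≤ 2*π)] at hθ
      have : |θ - π| = θ - π := abs_of_nonneg (by linarith [hθ.1])
      simp [this]
  rw [e1, e2]
  have : 2 / (B' - 1) * ε ^ (1 - B') = ε ^ (1-B')/(B'-1) + ε ^ (1-B')/(B'-1) := by ring
  rw [this]
  exact add_le_add hJbound hJbound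

lemma lemC (φ : ℂ → ℂ) (b : ℕ → ℂ)
    (hφ : DifferentiableOn ℂ φ (Metric.ball (1:ℂ) 1))
    (hb : ∀ s ∈ Metric.ball (1:ℂ) 1, HasSum (fun n : ℕ => b n * (1 - s) ^ n) (φ s))
    (r : NNReal) (hr0 : 0 < r) (hr1 : (r:ℝ) < 1) :
    cauchyPowerSeries φ 1 r = FormalMultilinearSeries.ofScalars ℂ (fun n => (-1)^n * b n) := by
  set q := FormalMultilinearSeries.ofScalars ℂ (fun n : ℕ => (-1:ℂ)^n * b n) with hq
  -- power series at 1 from Cauchy theory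
  have hd : DifferentiableOn ℂ φ (closedBall (1:ℂ) (r:ℝ)) :=
    hφ.mono (closedBall_subset_ball hr1)
  have h1 : HasFPowerSeriesAt φ (cauchyPowerSeries φ 1 r) 1 :=
    (hd.hasFPowerSeriesOnBall hr0).hasFPowerSeriesAt
  -- power series at 1 from the hypothesis hb
  have hmem : (1/2 : ℂ) ∈ Metric.ball (1:ℂ) 1 := by
    simp [Metric.mem_ball, Complex.dist_eq]
    norm_num
  have hsum := hb _ hmem
  have ht : Filter.Tendsto (fun n : ℕ => ‖b n * (1 - (1/2:ℂ)) ^ n‖) Filter.atTop (nhds 0) := by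
    simpa using hsum.summable.tendsto_atTop_zero.norm
  obtain ⟨M, hM⟩ := ht.bddAbove_range
  simp only [mem_upperBounds, Set.mem_range, forall_exists_index] at hM
  have hnq : ∀ n, ‖q n‖ = ‖b n‖ := by
    intro n
    rw [hq, FormalMultilinearSeries.ofScalars_norm]
    simp
  have hrle : ((1/2 : NNReal) : ENNReal) ≤ q.radius := by
    apply q.le_radius_of_bound M
    intro n
    have : ‖b n * (1 - (1/2:ℂ)) ^ n‖ = ‖b n‖ * (1/2:ℝ) ^ n := by
      rw [norm_mul, norm_pow]
      norm_num
    rw [hnq]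
    calc ‖b n‖ * ((1/2 : NNReal):ℝ) ^ n = ‖b n * (1 - (1/2:ℂ)) ^ n‖ := by
          rw [this]; norm_num
      _ ≤ M := hM _ n rfl
  have h2 : HasFPowerSeriesAt φ q 1 := by
    refine ⟨((1/2 : NNReal) : ENNReal), hrle, by norm_num, ?_⟩
    intro y hy
    rw [mem_emetric_ball_zero_iff] at hy
    have hy' : ‖y‖ < 1/2 := by
      have h0 : ‖y‖₊ < (1/2 : NNReal) := ENNReal.coe_lt_coe.mp hy
      exact_mod_cast h0
    have hmem' : (1 + y : ℂ) ∈ Metric.ball (1:ℂ) 1 := by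
      simp [Metric.mem_ball, Complex.dist_eq]
      calc ‖y‖ < 1/2 := hy'
        _ < 1 := by norm_num
    have h := hb _ hmem'
    have he : (fun n : ℕ => q n fun _ => y) = fun n : ℕ => b n * (1 - (1+y)) ^ n := by
      funext n
      rw [hq, FormalMultilinearSeries.ofScalars_apply_eq, smul_eq_mul]
      rw [show (1:ℂ) - (1+y) = -y by ring, neg_pow]
      ring
    rw [he]
    exact h
  exact h1.eq_formalMultilinearSeries h2

-- bound ‖log s‖ ≤ |Real.log ‖s‖| + π for s ≠ 0
lemma lemLog (s : ℂ) (hs : s ≠ 0) : ‖Complex.log s‖ ≤ |Real.log ‖s‖| + π := by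
  rw [Complex.log]
  refine (norm_add_le _ _).trans ?_
  gcongr
  · simp
  · rw [norm_mul]
    simp
    exact Complex.abs_arg_le_pi s

lemma lemD (B B' : ℝ) (hB : 0 < B) (hBB' : B ≤ B') (x : ℂ)
    (h0 : 0 < ‖x‖) (h2 : ‖x‖ < 2) :
    Real.exp (B * ‖Complex.log x‖) ≤ Real.exp (B * π) * 2 ^ (B + B') * ‖x‖ ^ (-B') := by
  have hB' : 0 < B' := lt_of_lt_of_le hB hBB'
  have hx0 : x ≠ 0 := by simpa using h0.ne'
  have hlog := lemLog x hx0
  have step1 : Real.exp (B * ‖Complex.log x‖) ≤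
      Real.exp (B * π) * Real.exp (B * |Real.log ‖x‖|) := by
    rw [← Real.exp_add]
    apply Real.exp_le_exp.mpr
    have he : ‖x‖ = ‖x‖ := rfl
    rw [← he] at hlog
    nlinarith [mul_le_mul_of_nonneg_left hlog hB.le]
  refine step1.trans ?_
  rw [mul_assoc]
  refine mul_le_mul_of_nonneg_left ?_ (Real.exp_pos _).le
  rcases le_or_gt ‖x‖ 1 with h1 | h1
  · -- small case
    have : Real.exp (B * |Real.log ‖x‖|) = ‖x‖ ^ (-B) := by
      rw [_root_.abs_of_nonpos (Real.log_nonpos h0.le h1)]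
      rw [Real.rpow_def_of_pos h0]
      ring_nf
    rw [this]
    have hb : ‖x‖ ^ (-B) ≤ ‖x‖ ^ (-B') :=
      Real.rpow_le_rpow_of_exponent_ge h0 h1 (by linarith)
    have h2b : (1:ℝ) ≤ 2 ^ (B + B') := Real.one_le_rpow one_le_two (by linarith)
    nlinarith [Real.rpow_nonneg (norm_nonneg x) (-B')]
  · -- big case
    have : Real.exp (B * |Real.log ‖x‖|) = ‖x‖ ^ B := by
      rw [_root_.abs_of_nonneg (Real.log_nonneg h1.le)]
      rw [Real.rpow_def_of_pos h0]
      ring_nf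
    rw [this]
    have hb : ‖x‖ ^ B ≤ 2 ^ B := Real.rpow_le_rpow (norm_nonneg x) h2.le hB.le
    have hc : (2:ℝ) ^ (-B') ≤ ‖x‖ ^ (-B') :=
      Real.rpow_le_rpow_of_nonpos h0 h2.le (by linarith)
    calc ‖x‖ ^ B ≤ 2 ^ B := hb
      _ = 2 ^ (B + B') * 2 ^ (-B') := by
          rw [← Real.rpow_add two_pos]; ring_nf
      _ ≤ 2 ^ (B + B') * ‖x‖ ^ (-B') := by
          have := Real.rpow_nonneg (by norm_num : (0:ℝ) ≤ 2) (B + B')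
          nlinarith [hc, this]
lemma lemE (φ : ℂ → ℂ) (b : ℕ → ℂ) (A'' B' : ℝ) (hA'' : 0 ≤ A'') (hB' : 1 < B')
    (hφ : DifferentiableOn ℂ φ (Metric.ball (1:ℂ) 1))
    (hb : ∀ s ∈ Metric.ball (1:ℂ) 1, HasSum (fun n : ℕ => b n * (1 - s) ^ n) (φ s))
    (hφb : ∀ s ∈ Metric.ball (1:ℂ) 1, ‖φ s‖ ≤ A'' * ‖s‖ ^ (-B'))
    (n : ℕ) (hn : 1 ≤ n) :
    ‖b n‖ ≤ ((2*π)⁻¹ * (A'' * π ^ B' * (2/(B'-1))) * 3) * ((n:ℝ)+1) ^ (B'-1) := by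
  have hπ := Real.pi_gt_three
  have hn1 : (1:ℝ) ≤ (n:ℝ) := by exact_mod_cast hn
  set ε : ℝ := ((n:ℝ)+1)⁻¹ with hε
  have hε0 : 0 < ε := by positivity
  have hε2 : ε ≤ 1/2 := by
    rw [hε]
    rw [inv_le_comm₀ (by linarith) (by norm_num)]
    norm_num; linarith
  set r : ℝ := 1 - ε with hrdef
  have hr2 : 1/2 ≤ r := by simp [hrdef]; linarith
  have hr0 : 0 < r := by linarith
  have hr1 : r < 1 := by simp [hrdef]; linarith
  set rn : NNReal := Real.toNNReal r with hrn
  have hrnc : (rn : ℝ) = r := Real.coe_toNNReal r hr0.le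
  have hrn0 : 0 < rn := by
    rw [← NNReal.coe_lt_coe, hrnc]; exact hr0
  -- identify coefficient
  have hid : ‖b n‖ = ‖cauchyPowerSeries φ 1 rn n‖ := by
    rw [lemC φ b hφ hb rn hrn0 (by rw [hrnc]; exact hr1)]
    rw [FormalMultilinearSeries.ofScalars_norm]
    simp
  -- pointwise bound on the circle
  have hpt : ∀ θ ∈ Set.Icc (0:ℝ) (2*π), ‖φ (circleMap 1 (rn:ℝ) θ)‖ ≤
      A'' * π ^ B' * (ε + |θ - π|) ^ (-B') := by
    intro θ hθ
    have hθπ : |θ - π| ≤ π := by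
      rw [abs_le]; constructor <;> [linarith [hθ.1]; linarith [hθ.2]]
    have hcm : circleMap 1 (rn:ℝ) θ = (1:ℂ) + (r:ℂ) * Complex.exp (θ * Complex.I) := by
      simp [circleMap, hrnc]
    have hsball : circleMap 1 (rn:ℝ) θ ∈ Metric.ball (1:ℂ) 1 := by
      have hsph := circleMap_mem_sphere (1:ℂ) (R := (rn:ℝ)) rn.coe_nonneg θ
      rw [mem_sphere] at hsph
      rw [Metric.mem_ball, hsph, hrnc]
      exact hr1
    have h1 := hφb _ hsball
    have hAlow : (ε + |θ - π|) / π ≤ ‖circleMap 1 (rn:ℝ) θ‖ := by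
      rw [hcm]
      have := lemA r θ hr2 hr1 hθπ
      rw [show (1:ℝ) - r = ε by rw [hrdef]; ring] at this
      exact this
    have hbase : 0 < (ε + |θ - π|) / π := by positivity
    have h2 : ‖circleMap 1 (rn:ℝ) θ‖ ^ (-B') ≤ ((ε + |θ - π|) / π) ^ (-B') :=
      Real.rpow_le_rpow_of_nonpos hbase hAlow (by linarith)
    have h3 : ((ε + |θ - π|) / π) ^ (-B') = π ^ B' * (ε + |θ - π|) ^ (-B') := by
      rw [Real.div_rpow (by positivity) (by positivity : (0:ℝ) ≤ π)]
      rw [Real.rpow_neg (by positivity : (0:ℝ) ≤ π), div_eq_mul_inv, inv_inv]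
      ring
    calc ‖φ (circleMap 1 (rn:ℝ) θ)‖ ≤ A'' * ‖circleMap 1 (rn:ℝ) θ‖ ^ (-B') := h1
      _ ≤ A'' * ((ε + |θ - π|) / π) ^ (-B') := by
          exact mul_le_mul_of_nonneg_left h2 hA''
      _ = A'' * π ^ B' * (ε + |θ - π|) ^ (-B') := by rw [h3]; ring
  -- integrability of both sides
  have hcontR : Continuous fun θ : ℝ => (ε + |θ - π|) ^ (-B') := by
    apply Continuous.rpow_const
    · exact continuous_const.add (continuous_abs.comp (continuous_id.sub continuous_const))
    · intro x; left; positivity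
  have hiL : IntervalIntegrable (fun θ : ℝ => ‖φ (circleMap 1 (rn:ℝ) θ)‖)
      MeasureTheory.volume 0 (2*π) := by
    apply ContinuousOn.intervalIntegrable
    apply ContinuousOn.norm
    apply hφ.continuousOn.comp (continuous_circleMap 1 (rn:ℝ)).continuousOn
    intro θ _
    have hsph := circleMap_mem_sphere (1:ℂ) (R := (rn:ℝ)) rn.coe_nonneg θ
    rw [mem_sphere] at hsph
    rw [Metric.mem_ball, hsph, hrnc]
    exact hr1
  have hiR : IntervalIntegrable (fun θ : ℝ => A'' * π ^ B' * (ε + |θ - π|) ^ (-B'))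
      MeasureTheory.volume 0 (2*π) :=
    ((continuous_const.mul hcontR)).intervalIntegrable _ _
  -- integral bound
  have hInt : (∫ θ in (0:ℝ)..(2*π), ‖φ (circleMap 1 (rn:ℝ) θ)‖) ≤
      A'' * π ^ B' * (2 / (B' - 1) * ε ^ (1 - B')) := by
    calc (∫ θ in (0:ℝ)..(2*π), ‖φ (circleMap 1 (rn:ℝ) θ)‖)
        ≤ ∫ θ in (0:ℝ)..(2*π), A'' * π ^ B' * (ε + |θ - π|) ^ (-B') :=
          intervalIntegral.integral_mono_on (by positivity) hiL hiR hpt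
      _ = A'' * π ^ B' * ∫ θ in (0:ℝ)..(2*π), (ε + |θ - π|) ^ (-B') :=
          intervalIntegral.integral_const_mul _ _
      _ ≤ A'' * π ^ B' * (2 / (B' - 1) * ε ^ (1 - B')) := by
          apply mul_le_mul_of_nonneg_left (lemB B' ε hB' hε0)
          positivity
  -- the power of the radius
  have hr3 : |(rn:ℝ)|⁻¹ ^ n ≤ 3 := by
    rw [hrnc, abs_of_pos hr0]
    have hne : (n:ℝ) ≠ 0 := by linarith
    have e1 : r⁻¹ = 1 + 1/(n:ℝ) := by
      rw [hrdef, hε]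
      field_simp
      simp [hne]
    rw [e1]
    have e2 : (1 + 1/(n:ℝ)) ^ n ≤ Real.exp (1/(n:ℝ)) ^ n := by
      apply pow_le_pow_left₀ (by positivity)
      linarith [Real.add_one_le_exp (1/(n:ℝ))]
    have e3 : Real.exp (1/(n:ℝ)) ^ n = Real.exp 1 := by
      rw [← Real.exp_nat_mul]
      congr 1
      field_simp
    calc (1 + 1/(n:ℝ)) ^ n ≤ Real.exp (1/(n:ℝ)) ^ n := e2
      _ = Real.exp 1 := e3
      _ ≤ 3 := by linarith [Real.exp_one_lt_d9]
  -- epsilon power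
  have hεp : ε ^ (1 - B') = ((n:ℝ)+1) ^ (B'-1) := by
    rw [hε, ← Real.rpow_neg_one ((n:ℝ)+1), ← Real.rpow_mul (by positivity : (0:ℝ) ≤ (n:ℝ)+1)]
    congr 1
    ring
  -- put everything together
  have hmain := norm_cauchyPowerSeries_le φ 1 (rn:ℝ) n
  rw [hid]
  have hI0 : (0:ℝ) ≤ (2*π)⁻¹ := by positivity
  have hJ : (2*π)⁻¹ * (∫ θ in (0:ℝ)..(2*π), ‖φ (circleMap 1 (rn:ℝ) θ)‖)
      ≤ (2*π)⁻¹ * (A'' * π ^ B' * (2 / (B' - 1) * ε ^ (1 - B'))) :=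
    mul_le_mul_of_nonneg_left hInt hI0
  have hIntnn : (0:ℝ) ≤ ∫ θ in (0:ℝ)..(2*π), ‖φ (circleMap 1 (rn:ℝ) θ)‖ :=
    intervalIntegral.integral_nonneg (by positivity) (fun x _ => norm_nonneg _)
  calc ‖cauchyPowerSeries φ 1 (rn:ℝ) n‖
      ≤ ((2*π)⁻¹ * ∫ θ in (0:ℝ)..(2*π), ‖φ (circleMap 1 (rn:ℝ) θ)‖) * |(rn:ℝ)|⁻¹ ^ n := hmain
    _ ≤ ((2*π)⁻¹ * (A'' * π ^ B' * (2 / (B' - 1) * ε ^ (1 - B')))) * 3 := by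
        apply mul_le_mul hJ hr3 (by positivity)
        exact mul_nonneg hI0 (mul_nonneg (mul_nonneg hA''
          (Real.rpow_nonneg Real.pi_pos.le _)) (mul_nonneg
          (div_nonneg (by norm_num) (by linarith)) (Real.rpow_nonneg hε0.le _)))
    _ = ((2*π)⁻¹ * (A'' * π ^ B' * (2/(B'-1))) * 3) * ((n:ℝ)+1) ^ (B'-1) := by
        rw [hεp]; ring

theorem stmt_4 (A B : ℝ) (hA : 0 < A) (hB : 0 < B) (F : ℂ → ℂ)
    (hF : DifferentiableOn ℂ F borelDelta)
    (hbound : ∀ ζ ∈ borelDelta, ‖F ζ‖ ≤ A * Real.exp (B * ‖ζ‖))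
    (b : ℕ → ℂ)
    (hb : ∀ s ∈ Metric.ball (1 : ℂ) 1,
      HasSum (fun n : ℕ => b n * (1 - s) ^ n) (F (-Complex.log s)))
    (C : ℝ) (hC : max B 1 < C) :
    Summable (fun n : ℕ => ‖b (n + 1)‖ / ((n : ℝ) + 1) ^ C) := by
  set φ : ℂ → ℂ := fun s => F (-Complex.log s) with hφdef
  have hlogdiff : DifferentiableOn ℂ (fun z : ℂ => -Complex.log z) (Metric.ball (1:ℂ) 1) := by
    intro s hs
    have hre : 0 < s.re := by
      rw [Metric.mem_ball, Complex.dist_eq] at hs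
      have h1 := Complex.abs_re_le_norm (s - 1)
      rw [Complex.sub_re, Complex.one_re] at h1
      have habs : |s.re - 1| < 1 := lt_of_le_of_lt h1 hs
      have := abs_lt.mp habs
      linarith [this.1]
    exact ((Complex.differentiableAt_log (Or.inl hre)).neg).differentiableWithinAt
  have hφ : DifferentiableOn ℂ φ (Metric.ball (1:ℂ) 1) :=
    hF.comp hlogdiff (fun s hs => ⟨s, hs, rfl⟩)
  have hb' : ∀ s ∈ Metric.ball (1:ℂ) 1,
      HasSum (fun n : ℕ => b n * (1 - s) ^ n) (φ s) := hb
  set B' : ℝ := (max B 1 + C)/2 with hB'def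
  have hmax1 := le_max_left B 1
  have hmax2 := le_max_right B 1
  have hB'1 : 1 < B' := by rw [hB'def]; linarith
  have hBB' : B ≤ B' := by rw [hB'def]; linarith
  have hB'C : B' < C := by rw [hB'def]; linarith
  set A'' : ℝ := A * Real.exp (B * π) * 2 ^ (B + B') with hA''def
  have hA''0 : 0 ≤ A'' := by positivity
  have hφb : ∀ s ∈ Metric.ball (1:ℂ) 1, ‖φ s‖ ≤ A'' * ‖s‖ ^ (-B') := by
    intro s hs
    have hdist : ‖s - 1‖ < 1 := by
      rw [Metric.mem_ball, Complex.dist_eq] at hs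
      exact hs
    have habs : |‖s‖ - ‖(1:ℂ)‖| ≤ ‖s - 1‖ := abs_norm_sub_norm_le s 1
    rw [norm_one] at habs
    have habs' := abs_le.mp habs
    have h0 : 0 < ‖s‖ := by linarith [habs'.1]
    have h2 : ‖s‖ < 2 := by linarith [habs'.2]
    calc ‖φ s‖ ≤ A * Real.exp (B * ‖-Complex.log s‖) := hbound _ ⟨s, hs, rfl⟩
      _ = A * Real.exp (B * ‖Complex.log s‖) := by rw [norm_neg]
      _ ≤ A * (Real.exp (B * π) * 2 ^ (B + B') * ‖s‖ ^ (-B')) :=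
          mul_le_mul_of_nonneg_left (lemD B B' hB hBB' s h0 h2) hA.le
      _ = A'' * ‖s‖ ^ (-B') := by rw [hA''def]; ring
  set K : ℝ := (2*π)⁻¹ * (A'' * π ^ B' * (2/(B'-1))) * 3 with hK
  have hK0 : 0 ≤ K := by
    rw [hK]
    have h1 : (0:ℝ) ≤ (2*π)⁻¹ := by positivity
    have h2 : (0:ℝ) ≤ π ^ B' := Real.rpow_nonneg Real.pi_pos.le _
    have h3 : (0:ℝ) ≤ 2/(B'-1) := div_nonneg (by norm_num) (by linarith)
    have := mul_nonneg (mul_nonneg hA''0 h2) h3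
    nlinarith
  have hcoeff : ∀ n : ℕ, 1 ≤ n → ‖b n‖ ≤ K * ((n:ℝ)+1) ^ (B'-1) := fun n hn =>
    lemE φ b A'' B' hA''0 hB'1 hφ hb' hφb n hn
  have hterm : ∀ n : ℕ, ‖b (n+1)‖ / ((n:ℝ)+1) ^ C ≤
      (K * 2 ^ (B'-1)) * ((n:ℝ)+1) ^ (B'-1-C) := by
    intro n
    have hx : (0:ℝ) < (n:ℝ)+1 := by positivity
    have hpos : (0:ℝ) < ((n:ℝ)+1) ^ C := Real.rpow_pos_of_pos hx _
    rw [div_le_iff₀ hpos]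
    have h1 : ‖b (n+1)‖ ≤ K * (((n:ℝ)+1)+1) ^ (B'-1) := by
      have := hcoeff (n+1) (by omega)
      convert this using 3
      push_cast
      ring
    have h2 : (((n:ℝ)+1)+1) ^ (B'-1) ≤ (2*((n:ℝ)+1)) ^ (B'-1) :=
      Real.rpow_le_rpow (by positivity) (by linarith) (by linarith)
    have h3 : (2*((n:ℝ)+1)) ^ (B'-1) = 2 ^ (B'-1) * ((n:ℝ)+1) ^ (B'-1) :=
      Real.mul_rpow (by norm_num) (by positivity)
    have hee : B'-1-C+C = B'-1 := by ring
    calc ‖b (n+1)‖ ≤ K * (((n:ℝ)+1)+1) ^ (B'-1) := h1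
      _ ≤ K * (2 ^ (B'-1) * ((n:ℝ)+1) ^ (B'-1)) := by
          rw [← h3]; exact mul_le_mul_of_nonneg_left h2 hK0
      _ = (K * 2 ^ (B'-1)) * ((n:ℝ)+1) ^ (B'-1-C) * ((n:ℝ)+1) ^ C := by
          rw [mul_assoc (K * 2 ^ (B'-1)), ← Real.rpow_add hx, hee]
          ring
  have hp : B'-1-C < -1 := by linarith
  have hsum0 : Summable (fun n : ℕ => ((n:ℝ)) ^ (B'-1-C)) := Real.summable_nat_rpow.mpr hp
  have hsum1 : Summable (fun n : ℕ => ((n:ℝ)+1) ^ (B'-1-C)) := by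
    have h := (summable_nat_add_iff 1).mpr hsum0
    apply h.congr
    intro n
    push_cast
    ring_nf
  exact Summable.of_nonneg_of_le (fun n => by positivity) hterm (hsum1.mul_left _)
end

section
/- Let f̃ be a holomorphic function on Δ with |f̃(ζ)| ≤ A·e^{B|ζ|} for all ζ ∈ Δ, where A>0, B>0, and set φ(s) = f̃(−Log s) for s ∈ D(1,1). Then for every real ζ ≥ 0 and every integer n ≥ 0 (with the convention 0^0 = 1), the n-th derivative of φ satisfies |φ^{(n)}(e^{−ζ})| ≤ A·(n+B)^{n+B}·n!/(B^B·n^n) · e^{(n+B)ζ}. -/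
open Complex Real Metric Set

lemma norm_log_one_sub_le' {w : ℂ} (hw : ‖w‖ < 1) :
    ‖Complex.log (1 - w)‖ ≤ -Real.log (1 - ‖w‖) := by
  have h1 : HasSum (fun n : ℕ ↦ (-1) ^ (n + 1) * (-w) ^ n / n) (Complex.log (1 - w)) := by
    simpa [sub_eq_add_neg] using Complex.hasSum_taylorSeries_log (z := -w) (by simpa)
  have h2 : HasSum (fun n : ℕ => ‖w‖ ^ (n + 1) / (n + 1)) (-Real.log (1 - ‖w‖)) :=
    Real.hasSum_pow_div_log_of_abs_lt_one (by rwa [_root_.abs_of_nonneg (norm_nonneg w)])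
  have h2' : HasSum (fun n : ℕ => ‖w‖ ^ n / n) (-Real.log (1 - ‖w‖)) := by
    have := (hasSum_nat_add_iff' (f := fun n : ℕ => ‖w‖ ^ n / n) 1).mp (by simpa using h2)
    simpa using this
  have hnorm : HasSum (fun n : ℕ => ‖(-1 : ℂ) ^ (n + 1) * (-w) ^ n / n‖)
      (-Real.log (1 - ‖w‖)) := by
    convert h2' using 2 with n
    simp [norm_div, norm_mul, norm_pow]
  calc ‖Complex.log (1 - w)‖ = ‖∑' n : ℕ, (-1 : ℂ) ^ (n + 1) * (-w) ^ n / n‖ := by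
        rw [h1.tsum_eq]
    _ ≤ ∑' n : ℕ, ‖(-1 : ℂ) ^ (n + 1) * (-w) ^ n / n‖ :=
        norm_tsum_le_tsum_norm hnorm.summable
    _ = -Real.log (1 - ‖w‖) := hnorm.tsum_eq

theorem stmt_7 (A B : ℝ) (hA : 0 < A) (hB : 0 < B) (F φ : ℂ → ℂ)
    (hF : DifferentiableOn ℂ F borelDelta)
    (hbound : ∀ ζ ∈ borelDelta, ‖F ζ‖ ≤ A * Real.exp (B * ‖ζ‖))
    (hφ : ∀ s ∈ Metric.ball (1 : ℂ) 1, φ s = F (-Complex.log s)) :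
    ∀ ζ : ℝ, 0 ≤ ζ → ∀ n : ℕ,
      ‖iteratedDeriv n φ ((Real.exp (-ζ) : ℝ) : ℂ)‖ ≤
        A * ((n : ℝ) + B) ^ ((n : ℝ) + B) * (Nat.factorial n : ℝ) /
            (B ^ B * (n : ℝ) ^ (n : ℝ)) *
          Real.exp (((n : ℝ) + B) * ζ) := by
  have hslit : ∀ s ∈ Metric.ball (1:ℂ) 1, s ∈ Complex.slitPlane := by
    intro s hs
    rw [Metric.mem_ball, dist_eq_norm] at hs
    refine Complex.mem_slitPlane_iff.2 (Or.inl ?_)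
    have h := (Complex.abs_re_le_norm (s - 1)).trans_lt hs
    simp only [Complex.sub_re, Complex.one_re] at h
    linarith [(abs_lt.1 h).1]
  have hφdiff : DifferentiableOn ℂ φ (Metric.ball (1:ℂ) 1) := by
    have hg : DifferentiableOn ℂ (fun s : ℂ => -Complex.log s) (Metric.ball (1:ℂ) 1) :=
      fun s hs => ((Complex.differentiableAt_log (hslit s hs)).neg).differentiableWithinAt
    exact (hF.comp hg (fun s hs => ⟨s, hs, rfl⟩)).congr hφ
  have hφbound : ∀ s ∈ Metric.ball (1:ℂ) 1,
      ‖φ s‖ ≤ A * Real.exp (B * (-Real.log (1 - ‖s - 1‖))) := by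
    intro s hs
    have hs' : ‖s - 1‖ < 1 := by rwa [Metric.mem_ball, dist_eq_norm] at hs
    have hw : ‖(1 : ℂ) - s‖ < 1 := by rwa [norm_sub_rev]
    have hlog : ‖Complex.log s‖ ≤ -Real.log (1 - ‖s - 1‖) := by
      have := norm_log_one_sub_le' hw
      rwa [sub_sub_cancel, norm_sub_rev] at this
    rw [hφ s hs]
    calc ‖F (-Complex.log s)‖ ≤ A * Real.exp (B * ‖-Complex.log s‖) :=
          hbound _ ⟨s, hs, rfl⟩
      _ ≤ A * Real.exp (B * (-Real.log (1 - ‖s - 1‖))) := by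
          gcongr
          rwa [norm_neg]
  intro ζ hζ n
  set x : ℝ := Real.exp (-ζ) with hxdef
  have hx0 : 0 < x := Real.exp_pos _
  have hx1 : x ≤ 1 := Real.exp_le_one_iff.2 (by linarith)
  have hxball : (x : ℂ) ∈ Metric.ball (1:ℂ) 1 := by
    rw [Metric.mem_ball, dist_eq_norm, ← Complex.ofReal_one, ← Complex.ofReal_sub,
      Complex.norm_real, Real.norm_eq_abs, abs_sub_lt_iff]
    constructor <;> linarith
  rcases Nat.eq_zero_or_pos n with rfl | hn
  · -- n = 0
    have hlogx : Complex.log (x : ℂ) = ((-ζ : ℝ) : ℂ) := by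
      rw [← Complex.ofReal_log hx0.le, hxdef, Real.log_exp]
    have hmem : -Complex.log (x : ℂ) ∈ borelDelta := ⟨x, hxball, rfl⟩
    have this1 := hbound _ hmem
    rw [iteratedDeriv_zero, hφ _ hxball]
    rw [hlogx] at this1 ⊢
    simp only [← Complex.ofReal_neg, neg_neg, Complex.norm_real, Real.norm_eq_abs,
      _root_.abs_of_nonneg hζ] at this1 ⊢
    refine this1.trans (le_of_eq ?_)
    simp only [Nat.cast_zero, zero_add, Real.rpow_zero, Nat.factorial_zero, Nat.cast_one,
      mul_one]
    rw [mul_div_assoc, div_self (Real.rpow_pos_of_pos hB B).ne', mul_one]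
  · -- n ≥ 1
    have hn' : (0:ℝ) < n := by exact_mod_cast hn
    have hnB : (0:ℝ) < (n:ℝ) + B := by linarith
    set r : ℝ := x * n / ((n:ℝ) + B) with hrdef
    have hr0 : 0 < r := by positivity
    have hrx : r < x := by
      rw [hrdef, div_lt_iff₀ hnB]
      nlinarith
    have hxr : x - r = x * B / ((n:ℝ) + B) := by
      field_simp [hrdef]
      rw [hrdef]
      linear_combination (-1:ℝ) * (div_mul_cancel₀ (x * (n:ℝ)) hnB.ne')
    have hxr0 : 0 < x - r := by linarith
    set R : NNReal := ⟨r, hr0.le⟩ with hRdef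
    have hRr : (R : ℝ) = r := rfl
    have hsub : Metric.closedBall (x:ℂ) r ⊆ Metric.ball (1:ℂ) 1 := by
      intro s hs
      rw [Metric.mem_closedBall, dist_eq_norm] at hs
      rw [Metric.mem_ball, dist_eq_norm]
      have hx1' : ‖(x:ℂ) - 1‖ = 1 - x := by
        rw [← Complex.ofReal_one, ← Complex.ofReal_sub, Complex.norm_real, Real.norm_eq_abs,
          abs_of_nonpos (by linarith)]
        ring
      calc ‖s - 1‖ ≤ ‖s - (x:ℂ)‖ + ‖(x:ℂ) - 1‖ := by
            have := norm_add_le (s - (x:ℂ)) ((x:ℂ) - 1)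
            rwa [sub_add_sub_cancel] at this
        _ ≤ r + (1 - x) := by rw [hx1']; gcongr
        _ < 1 := by linarith
    have hps : HasFPowerSeriesOnBall φ (cauchyPowerSeries φ x R) x R :=
      DifferentiableOn.hasFPowerSeriesOnBall (hφdiff.mono hsub) (by exact_mod_cast hr0)
    have hid : iteratedDeriv n φ (x:ℂ) =
        n.factorial • (cauchyPowerSeries φ x R n fun _ => (1:ℂ)) := by
      rw [iteratedDeriv_eq_iteratedFDeriv, ← hps.factorial_smul]
    -- sup bound on the circle
    set M : ℝ := A * Real.exp (B * (-Real.log (x - r))) with hMdef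
    have hM0 : 0 < M := by positivity
    have hcirc : ∀ θ : ℝ, ‖φ (circleMap x r θ)‖ ≤ M := by
      intro θ
      have hmem : circleMap x r θ ∈ Metric.closedBall (x:ℂ) r :=
        circleMap_mem_closedBall _ hr0.le _
      have hball := hsub hmem
      refine (hφbound _ hball).trans ?_
      have h1 : ‖circleMap x r θ - (x:ℂ)‖ = r := by
        simpa [dist_eq_norm] using circleMap_mem_sphere (x:ℂ) hr0.le θ
      have hx1' : ‖(x:ℂ) - 1‖ = 1 - x := by
        rw [← Complex.ofReal_one, ← Complex.ofReal_sub, Complex.norm_real, Real.norm_eq_abs,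
          abs_of_nonpos (by linarith)]
        ring
      have h2 : ‖circleMap x r θ - 1‖ ≤ r + (1 - x) := by
        calc ‖circleMap x r θ - 1‖ ≤ ‖circleMap x r θ - (x:ℂ)‖ + ‖(x:ℂ) - 1‖ := by
              have := norm_add_le (circleMap x r θ - (x:ℂ)) ((x:ℂ) - 1)
              rwa [sub_add_sub_cancel] at this
          _ ≤ r + (1 - x) := by rw [h1, hx1']
      have hloglog : -Real.log (1 - ‖circleMap x r θ - 1‖) ≤ -Real.log (x - r) :=
        neg_le_neg (Real.log_le_log hxr0 (by linarith))
      exact mul_le_mul_of_nonneg_left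
        (Real.exp_le_exp.2 (mul_le_mul_of_nonneg_left hloglog hB.le)) hA.le
    have hcont : ContinuousOn (fun θ : ℝ => ‖φ (circleMap x r θ)‖) (Set.uIcc 0 (2*π)) :=
      ((hφdiff.continuousOn.comp (continuous_circleMap (x:ℂ) r).continuousOn
        (fun θ _ => hsub (circleMap_mem_closedBall _ hr0.le θ))).norm)
    have hintg : IntervalIntegrable (fun θ : ℝ => ‖φ (circleMap x r θ)‖)
        MeasureTheory.volume 0 (2*π) := hcont.intervalIntegrable
    have hint : (∫ θ in (0:ℝ)..2*π, ‖φ (circleMap x r θ)‖) ≤ 2*π*M := by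
      calc (∫ θ in (0:ℝ)..2*π, ‖φ (circleMap x r θ)‖) ≤ ∫ _ in (0:ℝ)..2*π, M :=
            intervalIntegral.integral_mono_on Real.two_pi_pos.le hintg
              intervalIntegrable_const (fun θ _ => hcirc θ)
        _ = 2*π*M := by rw [intervalIntegral.integral_const, smul_eq_mul, sub_zero]
    have hpn : ‖cauchyPowerSeries φ x R n‖ ≤ M * r⁻¹ ^ n := by
      refine (norm_cauchyPowerSeries_le φ x R n).trans ?_
      rw [hRr, _root_.abs_of_nonneg hr0.le]
      have hM' : (2*π)⁻¹ * (∫ θ in (0:ℝ)..2*π, ‖φ (circleMap x r θ)‖) ≤ M := by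
        calc (2*π)⁻¹ * (∫ θ in (0:ℝ)..2*π, ‖φ (circleMap x r θ)‖) ≤ (2*π)⁻¹ * (2*π*M) := by
              gcongr
          _ = M := by field_simp
      exact mul_le_mul_of_nonneg_right hM' (pow_nonneg (inv_nonneg.2 hr0.le) n)
    -- putting it together
    have hnorm : ‖iteratedDeriv n φ (x:ℂ)‖ ≤ (n.factorial : ℝ) * (M * r⁻¹ ^ n) := by
      rw [hid]
      rw [← Nat.cast_smul_eq_nsmul ℂ, norm_smul, Complex.norm_natCast]
      gcongr
      calc ‖cauchyPowerSeries φ x R n fun _ => (1:ℂ)‖ ≤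
            ‖cauchyPowerSeries φ x R n‖ * ∏ _i : Fin n, ‖(1:ℂ)‖ :=
            (cauchyPowerSeries φ x R n).le_opNorm _
        _ = ‖cauchyPowerSeries φ x R n‖ := by simp
        _ ≤ M * r⁻¹ ^ n := hpn
    refine hnorm.trans (le_of_eq ?_)
    -- algebra
    have hlogxr : Real.log (x - r) = -ζ + Real.log B - Real.log ((n:ℝ)+B) := by
      rw [hxr, Real.log_div (by positivity) hnB.ne', Real.log_mul hx0.ne' hB.ne',
        hxdef, Real.log_exp]
    have h1 : Real.exp (B * (-Real.log (x-r))) =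
        Real.exp (B*ζ) * (((n:ℝ)+B)/B)^B := by
      rw [Real.rpow_def_of_pos (by positivity), Real.log_div hnB.ne' hB.ne', hlogxr,
        ← Real.exp_add]
      congr 1
      ring
    have hrinv : r⁻¹ = Real.exp ζ * (((n:ℝ)+B)/(n:ℝ)) := by
      rw [hrdef, hxdef, Real.exp_neg]
      field_simp
    have h2 : r⁻¹ ^ n = Real.exp ((n:ℝ)*ζ) * (((n:ℝ)+B)/(n:ℝ))^n := by
      rw [hrinv, mul_pow, ← Real.exp_nat_mul]
    rw [hMdef, h1, h2]
    rw [Real.div_rpow hnB.le hB.le, div_pow]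
    have e1 : ((n:ℝ)+B) ^ ((n:ℝ)+B) = ((n:ℝ)+B)^n * ((n:ℝ)+B)^B := by
      rw [Real.rpow_add hnB, Real.rpow_natCast]
    have e2 : ((n:ℝ)) ^ ((n:ℝ)) = ((n:ℝ))^n := Real.rpow_natCast _ _
    have e3 : Real.exp (((n:ℝ)+B)*ζ) = Real.exp ((n:ℝ)*ζ) * Real.exp (B*ζ) := by
      rw [← Real.exp_add]; congr 1; ring
    rw [e1, e2, e3]
    have hBB : (0:ℝ) < B ^ B := Real.rpow_pos_of_pos hB B
    have hnBB : (0:ℝ) < ((n:ℝ)+B) ^ B := Real.rpow_pos_of_pos hnB B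
    have hnn : (0:ℝ) < ((n:ℝ))^n := pow_pos hn' n
    field_simp
end

section
/- Fix λ>0, A>0, B>0 and z ∈ ℂ with Re z > B. Define for each integer N ≥ 0: R_fact(λ,A,B,N,z) = (A/(λB)^{λB}) · ((N+λB+1)^{N+λB+1}/(N+1)^N) · |Γ(λz)·Γ(N+1)/Γ(λz+N+1)| / (Re z − B). Then R_fact(λ,A,B,N,z) is asymptotically equivalent, as N → ∞, to A·e^{λB(1−ln(λB))}/N^{λ(Re z−B)−1} · |Γ(λz)|/(Re z − B); that is, the ratio of the two expressions tends to 1 as N → ∞. -/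
open Complex Real Filter

lemma gamma_prod {w : ℂ} (hw : 0 < w.re) (n : ℕ) :
    Complex.Gamma (w + n + 1) =
      Complex.Gamma w * ∏ j ∈ Finset.range (n + 1), (w + j) := by
  induction n with
  | zero =>
    simp only [Nat.cast_zero, add_zero, Finset.prod_range_one]
    rw [Complex.Gamma_add_one w (by intro h; rw [h] at hw; simp at hw)]
    simp [mul_comm]
  | succ n ih =>
    have hne : w + n + 1 ≠ 0 := by
      intro h
      have := congrArg Complex.re h
      simp [Complex.add_re] at this
      nlinarith [Nat.cast_nonneg (α := ℝ) n]
    have : w + (n + 1 : ℕ) + 1 = (w + n + 1) + 1 := by push_cast; ring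
    rw [this, Complex.Gamma_add_one _ hne, ih,
      show (∏ j ∈ Finset.range (n + 1 + 1), (w + (j : ℂ))) =
        (∏ j ∈ Finset.range (n + 1), (w + (j : ℂ))) * (w + ((n + 1 : ℕ) : ℂ)) from
        Finset.prod_range_succ _ _]
    push_cast
    ring

lemma aux_h {w : ℂ} (hw : 0 < w.re) :
    Tendsto (fun n : ℕ => ‖Complex.Gamma ((n : ℂ) + 1) / Complex.Gamma (w + n + 1)‖ *
      (n : ℝ) ^ w.re) atTop (nhds 1) := by
  have hwne : Complex.Gamma w ≠ 0 := by
    apply Complex.Gamma_ne_zero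
    intro m h
    rw [h] at hw
    simp at hw
    nlinarith [Nat.cast_nonneg (α := ℝ) m, hw]
  have h1 : Tendsto (fun n : ℕ => ‖Complex.GammaSeq w n / Complex.Gamma w‖) atTop (nhds 1) := by
    have := (Complex.GammaSeq_tendsto_Gamma w).div_const (Complex.Gamma w)
    rw [div_self hwne] at this
    simpa using this.norm
  refine h1.congr' ?_
  filter_upwards [eventually_ge_atTop 1] with n hn
  have hn0 : (0:ℝ) < n := by exact_mod_cast hn
  have key : Complex.GammaSeq w n / Complex.Gamma w =
      (n : ℂ) ^ w * (Complex.Gamma ((n : ℂ) + 1) / Complex.Gamma (w + n + 1)) := by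
    have hG : Complex.Gamma (w + n + 1) ≠ 0 := by
      apply Complex.Gamma_ne_zero
      intro m h
      have := congrArg Complex.re h
      simp [Complex.add_re] at this
      nlinarith [Nat.cast_nonneg (α := ℝ) n, Nat.cast_nonneg (α := ℝ) m]
    rw [Complex.GammaSeq, gamma_prod hw n]
    rw [Complex.Gamma_nat_eq_factorial]
    have hprod : (∏ j ∈ Finset.range (n + 1), (w + j)) ≠ 0 := by
      intro h
      rw [gamma_prod hw n, h, mul_zero] at hG
      exact hG rfl
    rw [div_div, mul_div_assoc, mul_comm (Complex.Gamma w)]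
  rw [key, norm_mul]
  have : ‖(n : ℂ) ^ w‖ = (n : ℝ) ^ w.re := by
    rw [show ((n : ℂ)) = ((n : ℝ) : ℂ) by push_cast; rfl]
    rw [Complex.norm_cpow_eq_rpow_re_of_pos hn0]
  rw [this]; ring

lemma aux_e {c : ℝ} (hc : 0 < c) :
    Tendsto (fun x : ℝ => (1 + c / x) ^ (x + c)) atTop (nhds (Real.exp c)) := by
  have hA : Tendsto (fun x : ℝ => (1 + c / x) ^ x) atTop (nhds (Real.exp c)) :=
    tendsto_one_add_div_rpow_exp c
  have hbase : Tendsto (fun x : ℝ => 1 + c / x) atTop (nhds 1) := by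
    simpa using tendsto_const_nhds.add (Tendsto.div_atTop (tendsto_const_nhds (x := c)) tendsto_id)
  have hB : Tendsto (fun x : ℝ => (1 + c / x) ^ c) atTop (nhds 1) := by
    have := ((Real.continuousAt_rpow_const 1 c (Or.inl one_ne_zero)).tendsto).comp hbase
    rwa [Real.one_rpow] at this
  have := hA.mul hB
  rw [mul_one] at this
  refine this.congr' ?_
  filter_upwards [eventually_ge_atTop (1:ℝ)] with x hx
  have hpos : 0 < 1 + c / x := by positivity
  rw [← Real.rpow_add hpos]

lemma aux_f {c : ℝ} (hc : 0 < c) :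
    Tendsto (fun n : ℕ => ((n : ℝ) + c + 1) ^ ((n : ℝ) + c + 1) / ((n : ℝ) + 1) ^ (n : ℝ) /
      ((n : ℝ) ^ (c + 1) * Real.exp c)) atTop (nhds 1) := by
  have hG1 : Tendsto (fun x : ℝ => (1 + c / (x + 1)) ^ (x + 1 + c)) atTop (nhds (Real.exp c)) :=
    (aux_e hc).comp (tendsto_atTop_add_const_right atTop 1 tendsto_id)
  have hG2 : Tendsto (fun x : ℝ => ((x + 1) / x) ^ (c + 1)) atTop (nhds 1) := by
    have hbase : Tendsto (fun x : ℝ => (x + 1) / x) atTop (nhds 1) := by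
      have : Tendsto (fun x : ℝ => 1 + 1 / x) atTop (nhds 1) := by
        simpa using tendsto_const_nhds.add (Tendsto.div_atTop (tendsto_const_nhds (x := (1:ℝ))) tendsto_id)
      refine this.congr' ?_
      filter_upwards [eventually_ge_atTop (1:ℝ)] with x hx
      field_simp
    have := ((Real.continuousAt_rpow_const 1 (c+1) (Or.inl one_ne_zero)).tendsto).comp hbase
    rwa [Real.one_rpow] at this
  have hG : Tendsto (fun x : ℝ =>
      (1 + c / (x + 1)) ^ (x + 1 + c) * ((x + 1) / x) ^ (c + 1) / Real.exp c)
      atTop (nhds 1) := by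
    have := (hG1.mul hG2).div_const (Real.exp c)
    rwa [mul_one, div_self (Real.exp_ne_zero c)] at this
  have := hG.comp (tendsto_natCast_atTop_atTop (R := ℝ))
  refine this.congr' ?_
  filter_upwards [eventually_ge_atTop 1] with n hn
  have hx : (1:ℝ) ≤ (n:ℝ) := by exact_mod_cast hn
  set x : ℝ := (n : ℝ) with hxdef
  have hx0 : 0 < x := by linarith
  have hx1 : 0 < x + 1 := by linarith
  have hE : 0 < 1 + c / (x + 1) := by positivity
  have key1 : x + c + 1 = (x + 1) * (1 + c / (x + 1)) := by field_simp; ring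
  have key2 : (x + c + 1) ^ (x + c + 1) =
      (x + 1) ^ x * (x + 1) ^ (c + 1) * (1 + c / (x + 1)) ^ (x + 1 + c) := by
    rw [show (x + c + 1) ^ (x + c + 1) = ((x + 1) * (1 + c / (x + 1))) ^ (x + c + 1) by
        rw [← key1],
      Real.mul_rpow (by positivity) (by positivity),
      show (x + 1) ^ (x + c + 1) = (x + 1) ^ (x + (c + 1)) by ring_nf,
      Real.rpow_add hx1,
      show (1 + c / (x + 1)) ^ (x + c + 1) = (1 + c / (x + 1)) ^ (x + 1 + c) by ring_nf]
  have key3 : ((x + 1) / x) ^ (c + 1) = (x + 1) ^ (c + 1) / x ^ (c + 1) :=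
    Real.div_rpow (by positivity) (by positivity) _
  simp only [Function.comp_apply]
  rw [key3, key2]
  have h1 : (x + 1) ^ x ≠ 0 := by positivity
  have h2 : (x:ℝ) ^ (c + 1) ≠ 0 := by positivity
  field_simp
  ring

lemma gamma_ne_zero_of_re_pos {s : ℂ} (hs : 0 < s.re) : Complex.Gamma s ≠ 0 := by
  apply Complex.Gamma_ne_zero
  intro m h
  have h2 : s.re = -(m : ℝ) := by rw [h]; simp
  have := Nat.cast_nonneg (α := ℝ) m
  linarith

lemma alg_aux (A cc e d g q r P Qb t1 t2 : ℝ) (hA : A ≠ 0) (hcc : cc ≠ 0) (he : e ≠ 0)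
    (hd : d ≠ 0) (hg : g ≠ 0) (hr : r ≠ 0) (hQb : Qb ≠ 0) (ht1 : t1 ≠ 0) (ht2 : t2 ≠ 0) :
    P / Qb / (t2 * e) * (q / r * (t1 * t2)) =
      A / cc * (P / Qb) * (g * q / r / d) / (A * (e / cc) / t1 * (g / d)) := by
  field_simp

theorem stmt_10 (lam A B : ℝ) (hlam : 0 < lam) (hA : 0 < A) (hB : 0 < B)
    (z : ℂ) (hz : B < z.re) :
    Filter.Tendsto (fun N : ℕ =>
      ((A / (lam * B) ^ (lam * B)) *
        (((N : ℝ) + lam * B + 1) ^ ((N : ℝ) + lam * B + 1) / ((N : ℝ) + 1) ^ (N : ℝ)) *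
          (‖Complex.Gamma ((lam : ℂ) * z) * Complex.Gamma ((N : ℂ) + 1) /
              Complex.Gamma ((lam : ℂ) * z + N + 1)‖ / (z.re - B)))
      /
      (A * Real.exp (lam * B * (1 - Real.log (lam * B))) / (N : ℝ) ^ (lam * (z.re - B) - 1) *
        (‖Complex.Gamma ((lam : ℂ) * z)‖ / (z.re - B))))
      Filter.atTop (nhds 1) := by
  set c := lam * B with hcdef
  have hc : 0 < c := by positivity
  set w : ℂ := (lam : ℂ) * z with hwdef
  have hwre : w.re = lam * z.re := by
    simp [hwdef, Complex.mul_re]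
  have hw : 0 < w.re := by rw [hwre]; nlinarith
  have hd : 0 < z.re - B := by linarith
  have hgw : Complex.Gamma w ≠ 0 := gamma_ne_zero_of_re_pos hw
  have hg : 0 < ‖Complex.Gamma w‖ := norm_pos_iff.mpr hgw
  have hfh := (aux_f hc).mul (aux_h hw)
  rw [mul_one] at hfh
  refine hfh.congr' ?_
  filter_upwards [eventually_ge_atTop 1] with n hn
  have hn0 : (0:ℝ) < (n : ℝ) := by exact_mod_cast hn
  have hGn : Complex.Gamma (w + n + 1) ≠ 0 := by
    apply gamma_ne_zero_of_re_pos
    simp only [Complex.add_re, Complex.natCast_re, Complex.one_re]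
    linarith [hw, hn0]
  have hr : 0 < ‖Complex.Gamma (w + n + 1)‖ := norm_pos_iff.mpr hGn
  have hrsplit : (n : ℝ) ^ w.re = (n : ℝ) ^ (lam * (z.re - B) - 1) * (n : ℝ) ^ (c + 1) := by
    rw [← Real.rpow_add hn0]
    congr 1
    rw [hwre, hcdef]; ring
  have hcc : Real.exp (c * (1 - Real.log c)) = Real.exp c / c ^ c := by
    rw [eq_div_iff (ne_of_gt (Real.rpow_pos_of_pos hc c)), Real.rpow_def_of_pos hc,
      ← Real.exp_add]
    ring_nf
  simp only [norm_div, norm_mul]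
  rw [hrsplit, hcc]
  have h1 : ((n : ℝ) + 1) ^ (n : ℝ) ≠ 0 := by positivity
  have h2 : (n : ℝ) ^ (c + 1) ≠ 0 := by positivity
  have h3 : (n : ℝ) ^ (lam * (z.re - B) - 1) ≠ 0 := by positivity
  have h4 : c ^ c ≠ 0 := by positivity
  have h5 : Real.exp c ≠ 0 := Real.exp_ne_zero c
  have h6 : z.re - B ≠ 0 := ne_of_gt hd
  have h7 : ‖Complex.Gamma w‖ ≠ 0 := ne_of_gt hg
  have h8 : ‖Complex.Gamma (w + n + 1)‖ ≠ 0 := ne_of_gt hr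
  exact alg_aux A (c ^ c) (Real.exp c) (z.re - B) ‖Complex.Gamma w‖
    ‖Complex.Gamma ((n : ℂ) + 1)‖ ‖Complex.Gamma (w + n + 1)‖
    (((n : ℝ) + c + 1) ^ ((n : ℝ) + c + 1)) (((n : ℝ) + 1) ^ (n : ℝ))
    ((n : ℝ) ^ (lam * (z.re - B) - 1)) ((n : ℝ) ^ (c + 1))
    (ne_of_gt hA) h4 h5 h6 h7 h8 h1 h3 h2
end

section
/- Let λ>0 and let f̃ be a holomorphic function on Δ_λ = {λζ : ζ ∈ Δ} with |f̃(ζ)| ≤ A·e^{B|ζ|} for all ζ ∈ Δ_λ, where A>0, B>0. Let (b_n^{(λ)})_{n≥0} be the Taylor coefficients at 1 of φ_λ(s) := f̃(−λ·Log s), i.e. φ_λ(s) = ∑_{n≥0} b_n^{(λ)}(1−s)^n on D(1,1). Then for every n ≥ 0 (with the convention 0^0 = 1): |b_n^{(λ)}| ≤ A·(n+λB)^{n+λB}/((λB)^{λB}·n^n). -/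
open Complex Real Metric Set
open scoped NNReal ENNReal

/-- `Δ_λ = {λζ : ζ ∈ Δ}`. -/
noncomputable def borelDeltaLam (lam : ℝ) : Set ℂ :=
  (fun ζ : ℂ => (lam : ℂ) * ζ) '' borelDelta


lemma aux_norm_log_le {s : ℂ} {r : ℝ} (hr : r < 1) (hs : ‖1 - s‖ ≤ r) :
    ‖Complex.log s‖ ≤ -Real.log (1 - r) := by
  have hr0 : 0 ≤ r := le_trans (norm_nonneg _) hs
  set z : ℂ := 1 - s with hz
  have hznorm : ‖z‖ < 1 := lt_of_le_of_lt hs hr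
  have hsum : HasSum (fun n : ℕ => z ^ n / n) (-Complex.log (1 - z)) :=
    Complex.hasSum_taylorSeries_neg_log hznorm
  have hrC : HasSum (fun n : ℕ => (r : ℂ) ^ n / n) (-Complex.log (1 - (r : ℂ))) :=
    Complex.hasSum_taylorSeries_neg_log (by
      rw [Complex.norm_real, Real.norm_eq_abs, _root_.abs_of_nonneg hr0]; exact hr)
  have hrsum : HasSum (fun n : ℕ => r ^ n / n) (-Real.log (1 - r)) := by
    rw [← Complex.hasSum_ofReal]
    convert hrC using 2 with n
    · push_cast; ring
    · push_cast [Complex.ofReal_log (by linarith : (0:ℝ) ≤ 1 - r)]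
      rfl
  have hle : ∀ n : ℕ, ‖z ^ n / (n : ℂ)‖ ≤ r ^ n / n := by
    intro n
    rcases n with _ | n
    · simp
    · rw [norm_div, norm_pow, Complex.norm_natCast]
      gcongr
  have hsummable : Summable fun n : ℕ => ‖z ^ n / (n : ℂ)‖ :=
    hrsum.summable.of_nonneg_of_le (fun n => norm_nonneg _) hle
  have h1 : ‖Complex.log s‖ = ‖-Complex.log (1 - z)‖ := by
    rw [hz]; rw [show (1 : ℂ) - (1 - s) = s by ring, norm_neg]
  rw [h1, ← hsum.tsum_eq]
  calc ‖∑' n : ℕ, z ^ n / (n : ℂ)‖ ≤ ∑' n : ℕ, ‖z ^ n / (n : ℂ)‖ :=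
        norm_tsum_le_tsum_norm hsummable
    _ ≤ ∑' n : ℕ, r ^ n / n := Summable.tsum_le_tsum hle hsummable hrsum.summable
    _ = -Real.log (1 - r) := hrsum.tsum_eq

lemma aux_cauchy (φ : ℂ → ℂ)
    (hφdiff : DifferentiableOn ℂ φ (Metric.ball (1 : ℂ) 1))
    (b : ℕ → ℂ)
    (hb : ∀ s ∈ Metric.ball (1 : ℂ) 1,
      HasSum (fun n : ℕ => b n * (1 - s) ^ n) (φ s))
    (n : ℕ) (r : ℝ) (hr0 : 0 < r) (hr1 : r < 1)
    (M : ℝ) (hM : 0 ≤ M)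
    (hφboundM : ∀ s ∈ Metric.ball (1 : ℂ) 1, ‖1 - s‖ ≤ r → ‖φ s‖ ≤ M) :
    ‖b n‖ ≤ M / r ^ n := by
  set R : ℝ≥0 := ⟨r, hr0.le⟩ with hR_def
  have hRr : (R : ℝ) = r := rfl
  have hsub : Metric.closedBall (1 : ℂ) R ⊆ Metric.ball (1 : ℂ) 1 :=
    closedBall_subset_ball (by rw [hRr]; exact hr1)
  have hRpos : (0 : ℝ≥0) < R := by exact_mod_cast hr0
  have hq : HasFPowerSeriesOnBall φ (cauchyPowerSeries φ 1 R) 1 R :=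
    (hφdiff.mono hsub).hasFPowerSeriesOnBall hRpos
  -- the formal series from b
  set p : FormalMultilinearSeries ℂ ℂ ℂ :=
    fun k => ContinuousMultilinearMap.mkPiRing ℂ (Fin k) ((-1 : ℂ) ^ k * b k) with hp_def
  have hpn : ∀ k, ‖p k‖ = ‖b k‖ := by
    intro k
    rw [hp_def]
    rw [ContinuousMultilinearMap.norm_mkPiRing, norm_mul, norm_pow, norm_neg, norm_one,
      one_pow, one_mul]
  -- bound on coefficients via convergence at a bigger radius
  set t : ℝ := (r + 1) / 2 with ht_def
  have htr : r < t := by rw [ht_def]; linarith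
  have ht1 : t < 1 := by rw [ht_def]; linarith
  have ht0 : 0 < t := lt_trans hr0 htr
  have hsum_t : HasSum (fun k : ℕ => b k * (t : ℂ) ^ k) (φ (1 - (t : ℂ))) := by
    have hmem : (1 - (t : ℂ)) ∈ Metric.ball (1 : ℂ) 1 := by
      rw [mem_ball, dist_eq_norm]
      rw [show (1 : ℂ) - t - 1 = -t by ring, norm_neg, Complex.norm_real, Real.norm_eq_abs,
        _root_.abs_of_pos ht0]
      exact ht1
    have := hb _ hmem
    rw [show (1 : ℂ) - (1 - (t : ℂ)) = (t : ℂ) by ring] at this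
    exact this
  have hterm : Filter.Tendsto (fun k : ℕ => ‖b k * (t : ℂ) ^ k‖) Filter.atTop (nhds 0) := by
    simpa using hsum_t.summable.tendsto_atTop_zero.norm
  obtain ⟨C, hC⟩ := hterm.bddAbove_range
  have hCk : ∀ k : ℕ, ‖b k‖ * t ^ k ≤ C := by
    intro k
    have h2 : ‖b k * (t : ℂ) ^ k‖ = ‖b k‖ * t ^ k := by
      rw [norm_mul, norm_pow, Complex.norm_real, Real.norm_eq_abs, _root_.abs_of_pos ht0]
    rw [← h2]
    exact hC ⟨k, rfl⟩
  have hrad : (R : ℝ≥0∞) ≤ p.radius := by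
    apply p.le_radius_of_bound C
    intro k
    rw [hpn k, hRr]
    calc ‖b k‖ * r ^ k ≤ ‖b k‖ * t ^ k := by gcongr
      _ ≤ C := hCk k
  have hp : HasFPowerSeriesOnBall φ p 1 R := by
    refine ⟨hrad, by exact_mod_cast hRpos, ?_⟩
    intro y hy
    have hy1 : ‖y‖ < 1 := by
      rw [EMetric.mem_ball, edist_zero_right] at hy
      have : ‖y‖ < (R : ℝ) := by exact_mod_cast hy
      exact this.trans (hRr ▸ hr1)
    have hmem : (1 + y) ∈ Metric.ball (1 : ℂ) 1 := by
      rw [mem_ball, dist_eq_norm, show (1 : ℂ) + y - 1 = y by ring]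
      exact hy1
    have := hb _ hmem
    rw [show (1 : ℂ) - (1 + y) = -y by ring] at this
    convert this using 2 with k
    · rfl
    rw [hp_def]
    simp only [ContinuousMultilinearMap.mkPiRing_apply, Finset.prod_const, Finset.card_univ,
      Fintype.card_fin, smul_eq_mul, neg_pow y]
    ring
  have hpq : p = cauchyPowerSeries φ 1 R :=
    hp.hasFPowerSeriesAt.eq_formalMultilinearSeries hq.hasFPowerSeriesAt
  have hle := norm_cauchyPowerSeries_le φ 1 R n
  rw [← hpq, hpn n] at hle
  -- bound the integral
  have hcont : Continuous fun θ : ℝ => ‖φ (circleMap 1 r θ)‖ := by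
    apply Continuous.norm
    apply hφdiff.continuousOn.comp_continuous (continuous_circleMap 1 r)
    intro θ
    rw [mem_ball, dist_eq_norm, circleMap_sub_center, norm_circleMap_zero,
      _root_.abs_of_pos hr0]
    exact hr1
  have hcircle : ∀ θ : ℝ, ‖φ (circleMap 1 r θ)‖ ≤ M := by
    intro θ
    have hmem : circleMap 1 r θ ∈ Metric.ball (1 : ℂ) 1 := by
      rw [mem_ball, dist_eq_norm, circleMap_sub_center, norm_circleMap_zero,
        _root_.abs_of_pos hr0]
      exact hr1
    apply hφboundM _ hmem
    rw [show (1 : ℂ) - circleMap 1 r θ = -(circleMap 1 r θ - 1) by ring, norm_neg,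
      circleMap_sub_center, norm_circleMap_zero, _root_.abs_of_pos hr0]
  have hint : (∫ θ in (0 : ℝ)..2 * π, ‖φ (circleMap 1 (R : ℝ) θ)‖) ≤ 2 * π * M := by
    rw [hRr]
    calc (∫ θ in (0 : ℝ)..2 * π, ‖φ (circleMap 1 r θ)‖)
        ≤ ∫ _ in (0 : ℝ)..2 * π, M :=
          intervalIntegral.integral_mono_on Real.two_pi_pos.le
            (hcont.intervalIntegrable _ _) intervalIntegrable_const
            (fun θ _ => hcircle θ)
      _ = 2 * π * M := by simp
  have habs : |(R : ℝ)| = r := by rw [hRr, _root_.abs_of_pos hr0]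
  calc ‖b n‖ ≤ ((2 * π)⁻¹ * ∫ θ in (0 : ℝ)..2 * π, ‖φ (circleMap 1 (R : ℝ) θ)‖) * |(R : ℝ)|⁻¹ ^ n := hle
    _ ≤ ((2 * π)⁻¹ * (2 * π * M)) * |(R : ℝ)|⁻¹ ^ n := by
        exact mul_le_mul_of_nonneg_right
          (mul_le_mul_of_nonneg_left hint (by positivity)) (by positivity)
    _ = M / r ^ n := by
        rw [habs, ← mul_assoc, inv_mul_cancel₀ (by positivity : (2 * π : ℝ) ≠ 0), one_mul,
          inv_pow, div_eq_mul_inv]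

theorem stmt_11 (lam : ℝ) (hlam : 0 < lam) (A B : ℝ) (hA : 0 < A) (hB : 0 < B)
    (F : ℂ → ℂ)
    (hF : DifferentiableOn ℂ F (borelDeltaLam lam))
    (hbound : ∀ ζ ∈ borelDeltaLam lam, ‖F ζ‖ ≤ A * Real.exp (B * ‖ζ‖))
    (b : ℕ → ℂ)
    (hb : ∀ s ∈ Metric.ball (1 : ℂ) 1,
      HasSum (fun n : ℕ => b n * (1 - s) ^ n) (F (-(lam : ℂ) * Complex.log s))) :
    ∀ n : ℕ, ‖b n‖ ≤
      A * ((n : ℝ) + lam * B) ^ ((n : ℝ) + lam * B) /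
        ((lam * B) ^ (lam * B) * (n : ℝ) ^ (n : ℝ)) := by
  set φ : ℂ → ℂ := fun s => F (-(lam : ℂ) * Complex.log s) with hφ_def
  have hmem : ∀ s ∈ Metric.ball (1 : ℂ) 1,
      -(lam : ℂ) * Complex.log s ∈ borelDeltaLam lam := fun s hs =>
    ⟨-Complex.log s, ⟨s, hs, rfl⟩, by ring⟩
  have hre : ∀ s ∈ Metric.ball (1 : ℂ) 1, 0 < s.re := by
    intro s hs
    rw [mem_ball, Complex.dist_eq] at hs
    have h1 : ‖s - 1‖ ^ 2 < 1 := by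
      nlinarith [norm_nonneg (s - 1)]
    rw [Complex.sq_norm, Complex.normSq_apply] at h1
    simp only [Complex.sub_re, Complex.sub_im, Complex.one_re, Complex.one_im] at h1
    nlinarith [sq_nonneg s.im, sq_nonneg s.re]
  have hφdiff : DifferentiableOn ℂ φ (Metric.ball (1 : ℂ) 1) := by
    apply hF.comp _ hmem
    intro s hs
    exact ((Complex.differentiableAt_log (Or.inl (hre s hs))).const_mul
      (-(lam : ℂ))).differentiableWithinAt
  have hφbound : ∀ r : ℝ, 0 ≤ r → r < 1 → ∀ s ∈ Metric.ball (1 : ℂ) 1, ‖1 - s‖ ≤ r →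
      ‖φ s‖ ≤ A * Real.exp (lam * B * (-Real.log (1 - r))) := by
    intro r hr0 hr1 s hs hsr
    have hlog : ‖Complex.log s‖ ≤ -Real.log (1 - r) := aux_norm_log_le hr1 hsr
    refine (hbound _ (hmem s hs)).trans ?_
    have h1 : ‖-(lam : ℂ) * Complex.log s‖ = lam * ‖Complex.log s‖ := by
      rw [norm_mul, norm_neg, Complex.norm_real, Real.norm_eq_abs, _root_.abs_of_pos hlam]
    rw [h1]
    have h2 : B * (lam * ‖Complex.log s‖) ≤ lam * B * (-Real.log (1 - r)) := by
      rw [show B * (lam * ‖Complex.log s‖) = lam * B * ‖Complex.log s‖ by ring]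
      exact mul_le_mul_of_nonneg_left hlog (by positivity)
    exact mul_le_mul_of_nonneg_left (Real.exp_le_exp.mpr h2) hA.le
  have key : ∀ (n : ℕ) (r : ℝ), 0 < r → r < 1 →
      ‖b n‖ ≤ A * Real.exp (lam * B * (-Real.log (1 - r))) / r ^ n := by
    intro n r hr0 hr1
    exact aux_cauchy φ hφdiff b hb n r hr0 hr1
      (A * Real.exp (lam * B * (-Real.log (1 - r)))) (by positivity)
      (fun s hs hsr => hφbound r hr0.le hr1 s hs hsr)
  intro n
  by_cases hn : n = 0
  · subst hn
    have h0mem : (0 : ℂ) ∈ borelDeltaLam lam :=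
      ⟨0, ⟨1, by simp [mem_ball], by simp⟩, by simp⟩
    have h1 := hb 1 (by simp [mem_ball])
    have h2 : HasSum (fun k : ℕ => b k * ((1 : ℂ) - 1) ^ k) (b 0 * ((1 : ℂ) - 1) ^ 0) :=
      hasSum_single 0 (fun k hk => by rw [sub_self, zero_pow hk, mul_zero])
    have heq := h1.unique h2
    rw [Complex.log_one, mul_zero, pow_zero, mul_one] at heq
    have hFb : ‖b 0‖ ≤ A := by
      rw [← heq]
      have := hbound 0 h0mem
      simpa using this
    refine hFb.trans (le_of_eq ?_)
    have hX : (0 : ℝ) < (lam * B) ^ (lam * B) := Real.rpow_pos_of_pos (mul_pos hlam hB) _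
    rw [Nat.cast_zero, zero_add, Real.rpow_zero, mul_one, mul_div_assoc,
      div_self hX.ne', mul_one]
  · have hn' : 0 < n := Nat.pos_of_ne_zero hn
    have hx : (0 : ℝ) < (n : ℝ) := by exact_mod_cast hn'
    set c : ℝ := lam * B with hc_def
    have hc : (0 : ℝ) < c := mul_pos hlam hB
    set x : ℝ := (n : ℝ) with hx_def
    have hxc : (0 : ℝ) < x + c := by linarith
    set r : ℝ := x / (x + c) with hr_def
    have hr0 : 0 < r := div_pos hx hxc
    have hr1 : r < 1 := (div_lt_one hxc).mpr (by linarith)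
    refine (key n r hr0 hr1).trans (le_of_eq ?_)
    have h1r : 1 - r = c / (x + c) := by
      rw [hr_def]; field_simp; ring
    have hlog1 : -Real.log (1 - r) = Real.log ((x + c) / c) := by
      rw [h1r, ← Real.log_inv]
      congr 1
      rw [inv_div]
    have hexp : Real.exp (c * Real.log ((x + c) / c)) = ((x + c) / c) ^ c := by
      rw [Real.rpow_def_of_pos (div_pos hxc hc), mul_comm]
    rw [hlog1, hexp]
    have hrn : r ^ n = x ^ x / (x + c) ^ x := by
      rw [← Real.rpow_natCast r n, hr_def, ← hx_def, Real.div_rpow hx.le hxc.le]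
    rw [hrn, Real.div_rpow hxc.le hc.le]
    have hcomb : (x + c) ^ c * (x + c) ^ x = (x + c) ^ (x + c) := by
      rw [← Real.rpow_add hxc, add_comm]
    have hccne : c ^ c ≠ 0 := (Real.rpow_pos_of_pos hc c).ne'
    have hxxne : x ^ x ≠ 0 := (Real.rpow_pos_of_pos hx x).ne'
    have hxcxne : (x + c) ^ x ≠ 0 := (Real.rpow_pos_of_pos hxc x).ne'
    have hxcane : (x + c) ^ (x + c) ≠ 0 := (Real.rpow_pos_of_pos hxc _).ne'
    field_simp
    rw [← hcomb]
end

section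
/- Let m ≥ 1 be an integer and suppose g_1,…,g_m are holomorphic functions on Δ with |g_l(ζ)| ≤ A_l·e^{B|ζ|} on Δ for some A_l > 0 and B > 0. For each l let (b_j^{(l)})_{j≥0} be the Taylor coefficients at 1 of φ_l(s) := g_l(−Log s), i.e. φ_l(s) = ∑_{j≥0} b_j^{(l)}(1−s)^j on D(1,1), and define d_{l+mj} = b_j^{(l)} for l ∈ {1,…,m}, j ≥ 0. Then for every real C > max(B,1), the series ∑_{n≥1} |d_n|/(n/m)^C converges. -/
open Complex Real Metric Set

lemma geom_lb {r θ : ℝ} (hr : 1/2 ≤ r) (hr1 : r ≤ 1) (hθ0 : 0 ≤ θ) (hθ1 : θ ≤ 2*π) :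
    (1 - r + min θ (2*π - θ) / 4) / 2 ≤ ‖(1 : ℂ) - circleMap 0 r θ‖ := by
  set u := min θ (2*π - θ) with hu_def
  set a := 1 - r with ha_def
  have ha : 0 ≤ a := by simp [ha_def]; linarith
  have hu0 : 0 ≤ u := le_min hθ0 (by linarith)
  have hπ : 0 < π := Real.pi_pos
  have hπ4 : π ≤ 4 := by linarith [Real.pi_le_four]
  have hc : (0:ℝ) < 2/π^2 := by positivity
  have hc8 : (1:ℝ)/8 ≤ 2/π^2 := by
    rw [div_le_div_iff₀ (by norm_num) (by positivity)]; nlinarith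
  have h1 : 2/π^2 * u^2 ≤ 1 - Real.cos θ := by
    rcases le_total θ π with h | h
    · have h2 := Real.cos_le_one_sub_mul_cos_sq (x := θ)
        (by rw [_root_.abs_of_nonneg hθ0]; exact h)
      have h4 : u^2 ≤ θ^2 := pow_le_pow_left₀ hu0 (min_le_left _ _) 2
      nlinarith
    · have h2 := Real.cos_le_one_sub_mul_cos_sq (x := θ - 2*π)
        (by rw [_root_.abs_of_nonpos (by linarith)]; linarith)
      rw [Real.cos_sub_two_pi] at h2
      have h4 : u^2 ≤ (2*π - θ)^2 := pow_le_pow_left₀ hu0 (min_le_right _ _) 2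
      have h5 : (2*π - θ)^2 = (θ - 2*π)^2 := by ring
      nlinarith
  have hnorm2 : ‖(1 : ℂ) - circleMap 0 r θ‖^2 = 1 - 2*r*Real.cos θ + r^2 := by
    rw [Complex.sq_norm, Complex.normSq_apply]
    simp [circleMap, Complex.exp_ofReal_mul_I_re, Complex.exp_ofReal_mul_I_im]
    nlinarith [Real.sin_sq_add_cos_sq θ]
  have key : ((a + u/4)/2)^2 ≤ ‖(1 : ℂ) - circleMap 0 r θ‖^2 := by
    rw [hnorm2]
    have heq : 1 - 2*r*Real.cos θ + r^2 = a^2 + 2*r*(1 - Real.cos θ) := by ring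
    rw [heq]
    have h5 : (0:ℝ) ≤ 1 - Real.cos θ := by nlinarith [Real.cos_le_one θ]
    have h6 : 2*r*(1 - Real.cos θ) ≥ 1/8 * u^2 := by nlinarith
    nlinarith [sq_nonneg (2*a - u/4)]
  calc (1 - r + u / 4) / 2 = Real.sqrt (((a + u/4)/2)^2) := by
        rw [Real.sqrt_sq (by positivity)]
    _ ≤ Real.sqrt (‖(1 : ℂ) - circleMap 0 r θ‖^2) := Real.sqrt_le_sqrt key
    _ = _ := Real.sqrt_sq (norm_nonneg _)

lemma pointwise_bound {A B B' : ℝ} (hA : 0 < A) (hB : 0 < B) (hBB' : B ≤ B')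
    {φ : ℂ → ℂ} (hbound : ∀ s ∈ Metric.ball (1:ℂ) 1, ‖φ s‖ ≤ A * Real.exp (B * ‖Complex.log s‖))
    {z : ℂ} (hz : z ∈ Metric.ball (0:ℂ) 1) :
    ‖φ (1 - z)‖ ≤ A * Real.exp (B*π) * (2:ℝ)^B * (1 + ‖(1:ℂ) - z‖ ^ (-B')) := by
  have hz1 : ‖z‖ < 1 := by simpa [Metric.mem_ball, dist_eq_norm] using hz
  have hs : (1:ℂ) - z ∈ Metric.ball (1:ℂ) 1 := by
    simpa [Metric.mem_ball, dist_eq_norm] using hz1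
  set t := ‖(1:ℂ) - z‖ with ht_def
  have ht0 : 0 < t := by
    rw [ht_def, norm_pos_iff, sub_ne_zero]
    intro h
    rw [← h] at hz1; simp at hz1
  have ht2 : t < 2 := by
    calc t ≤ ‖(1:ℂ)‖ + ‖z‖ := norm_sub_le _ _
    _ = 1 + ‖z‖ := by rw [norm_one]
    _ < 2 := by linarith
  have hlog : ‖Complex.log (1 - z)‖ ≤ |Real.log t| + π := by
    refine (Complex.norm_le_abs_re_add_abs_im _).trans ?_
    rw [Complex.log_re, Complex.log_im]
    have : ‖(1:ℂ) - z‖ = t := by rw [ht_def]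
    rw [this]
    gcongr
    exact Complex.abs_arg_le_pi _
  have h1 : ‖φ (1 - z)‖ ≤ A * (Real.exp (B * |Real.log t|) * Real.exp (B * π)) := by
    refine (hbound _ hs).trans ?_
    rw [← Real.exp_add, ← mul_add]
    have := hB.le
    gcongr
  have h2 : Real.exp (B * |Real.log t|) ≤ (2:ℝ)^B * (1 + t ^ (-B')) := by
    have h2B : (1:ℝ) ≤ (2:ℝ)^B := Real.one_le_rpow one_le_two hB.le
    have htB' : (0:ℝ) ≤ t ^ (-B') := Real.rpow_nonneg ht0.le _
    rcases le_total 1 t with h | h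
    · rw [_root_.abs_of_nonneg (Real.log_nonneg h)]
      have : Real.exp (B * Real.log t) = t ^ B := by
        rw [Real.rpow_def_of_pos ht0, mul_comm]
      rw [this]
      calc t ^ B ≤ (2:ℝ)^B := Real.rpow_le_rpow ht0.le ht2.le hB.le
        _ = (2:ℝ)^B * 1 := by ring
        _ ≤ _ := by nlinarith
    · rw [_root_.abs_of_nonpos (Real.log_nonpos ht0.le h)]
      have : Real.exp (B * -Real.log t) = t ^ (-B) := by
        rw [Real.rpow_def_of_pos ht0]; ring_nf
      rw [this]
      calc t ^ (-B) ≤ t ^ (-B') :=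
            Real.rpow_le_rpow_of_exponent_ge ht0 h (by linarith)
        _ ≤ _ := by nlinarith
  calc ‖φ (1 - z)‖ ≤ A * (Real.exp (B * |Real.log t|) * Real.exp (B * π)) := h1
    _ ≤ A * (((2:ℝ)^B * (1 + t ^ (-B'))) * Real.exp (B * π)) := by
        have := Real.exp_pos (B*π); gcongr
    _ = A * Real.exp (B*π) * (2:ℝ)^B * (1 + t ^ (-B')) := by ring

lemma coeff_est {b : ℕ → ℂ} {φ : ℂ → ℂ}
    (hφ : ∀ s ∈ Metric.ball (1:ℂ) 1, HasSum (fun j : ℕ => b j * (1 - s)^j) (φ s))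
    {r : ℝ} (hr0 : 0 < r) (hr1 : r < 1) (j : ℕ) :
    ‖b j‖ ≤ ((2*π)⁻¹ * ∫ θ in (0:ℝ)..2*π, ‖φ (1 - circleMap 0 r θ)‖) * r⁻¹ ^ j := by
  set p := FormalMultilinearSeries.ofScalars ℂ b with hp_def
  have hpn : ∀ n, ‖p n‖ = ‖b n‖ := fun n => FormalMultilinearSeries.ofScalars_norm ℂ b n
  have hrad : 1 ≤ p.radius := by
    apply ENNReal.le_of_forall_nnreal_lt
    intro ρ hρ
    have hρ1 : (ρ:ℝ) < 1 := by exact_mod_cast hρ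
    have hρ0 : (0:ℝ) ≤ ρ := ρ.coe_nonneg
    have hs : (1:ℂ) - ((ρ:ℝ):ℂ) ∈ Metric.ball (1:ℂ) 1 := by
      simp only [Metric.mem_ball, dist_eq_norm]
      rw [show (1:ℂ) - ((ρ:ℝ):ℂ) - 1 = -((ρ:ℝ):ℂ) by ring]
      rw [norm_neg, Complex.norm_real, Real.norm_eq_abs, _root_.abs_of_nonneg hρ0]
      exact hρ1
    have h := hφ _ hs
    simp only [sub_sub_cancel] at h
    have hsum : Summable fun n => ‖b n‖ * (ρ:ℝ)^n := by
      have h2 := h.summable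
      rw [← summable_norm_iff] at h2
      convert h2 using 2 with n
      rw [norm_mul, norm_pow, Complex.norm_real, Real.norm_eq_abs, _root_.abs_of_nonneg hρ0]
    apply p.le_radius_of_summable_norm
    simpa only [hpn] using hsum
  have hrpos : (0:ENNReal) < p.radius := lt_of_lt_of_le one_pos hrad
  have hball : HasFPowerSeriesOnBall p.sum p 0 1 :=
    (p.hasFPowerSeriesOnBall hrpos).mono one_pos hrad
  have hmem : ∀ z : ℂ, ‖z‖ < 1 → z ∈ EMetric.ball (0:ℂ) p.radius := by
    intro z hz
    refine EMetric.ball_subset_ball hrad ?_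
    rw [EMetric.mem_ball, edist_zero_right]
    rw [enorm_eq_nnnorm]; exact_mod_cast (by rw [← NNReal.coe_lt_coe]; simpa using hz : ‖z‖₊ < 1)
  have hsum_eq : ∀ z : ℂ, ‖z‖ < 1 → p.sum z = φ (1 - z) := by
    intro z hz
    have h1 : HasSum (fun n : ℕ => p n fun _ => z) (p.sum z) := p.hasSum (hmem z hz)
    have h2 : HasSum (fun n : ℕ => b n * z^n) (p.sum z) := by
      convert h1 using 2 with n
      rw [FormalMultilinearSeries.ofScalars_apply_eq, smul_eq_mul]
    have hs : (1:ℂ) - z ∈ Metric.ball (1:ℂ) 1 := by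
      simp only [Metric.mem_ball, dist_eq_norm]
      rw [show (1:ℂ) - z - 1 = -z by ring, norm_neg]
      exact hz
    have h3 := hφ _ hs
    simp only [sub_sub_cancel] at h3
    exact h2.unique h3
  set R : NNReal := ⟨r, hr0.le⟩ with hR_def
  have hRr : (R : ℝ) = r := rfl
  have hd : DifferentiableOn ℂ p.sum (Metric.closedBall (0:ℂ) R) := by
    refine (hball.differentiableOn).mono ?_
    intro z hz
    rw [Metric.mem_closedBall, dist_zero_right] at hz
    rw [EMetric.mem_ball, edist_zero_right]
    rw [enorm_eq_nnnorm]; exact_mod_cast (by rw [← NNReal.coe_lt_coe]; simpa using lt_of_le_of_lt (hRr ▸ hz) hr1 : ‖z‖₊ < 1)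
  have hc : HasFPowerSeriesOnBall p.sum (cauchyPowerSeries p.sum 0 R) 0 R :=
    hd.hasFPowerSeriesOnBall (by exact_mod_cast hr0)
  have hpq : p = cauchyPowerSeries p.sum 0 R :=
    hball.hasFPowerSeriesAt.eq_formalMultilinearSeries hc.hasFPowerSeriesAt
  have hbound := norm_cauchyPowerSeries_le p.sum 0 (R:ℝ) j
  rw [← hpq] at hbound
  rw [hpn j] at hbound
  have hint : (fun θ : ℝ => ‖p.sum (circleMap 0 (R:ℝ) θ)‖)
      = fun θ : ℝ => ‖φ (1 - circleMap 0 r θ)‖ := by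
    funext θ
    rw [hRr, hsum_eq _ (by rw [norm_circleMap_zero, abs_of_pos hr0]; exact hr1)]
  rw [hint] at hbound
  rwa [hRr, abs_of_pos hr0] at hbound

lemma integral_est {A B B' r : ℝ} (hA : 0 < A) (hB : 0 < B) (hBB' : B ≤ B') (hB1 : 1 < B')
    {φ : ℂ → ℂ}
    (hbound : ∀ s ∈ Metric.ball (1:ℂ) 1, ‖φ s‖ ≤ A * Real.exp (B * ‖Complex.log s‖))
    (hcont : ContinuousOn (fun θ : ℝ => ‖φ (1 - circleMap 0 r θ)‖) (Set.uIcc 0 (2*π)))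
    (hr : 1/2 ≤ r) (hr1 : r < 1) :
    ∫ θ in (0:ℝ)..2*π, ‖φ (1 - circleMap 0 r θ)‖ ≤
      (A * Real.exp (B*π) * (2:ℝ)^B * (2*π + (2:ℝ)^B' * (8/(B'-1)))) * (1-r)^(1-B') := by
  have hπ : 0 < π := Real.pi_pos
  set a := 1 - r with ha_def
  have ha : 0 < a := by simp only [ha_def]; linarith
  have ha1 : a ≤ 1 := by simp only [ha_def]; linarith
  set c0 := A * Real.exp (B*π) * (2:ℝ)^B with hc0_def
  have hc0 : 0 < c0 := by positivity
  -- the function with min, and the three auxiliary functions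
  set F : ℝ → ℝ := fun θ => (a + min θ (2*π - θ) / 4) ^ (-B') with hF_def
  set h : ℝ → ℝ := fun v => (1/4 * v + a) ^ (-B') with hh_def
  set M : ℝ → ℝ := fun θ => c0 * (1 + (2:ℝ)^B' * F θ) with hM_def
  have hIcc : Set.uIcc (0:ℝ) (2*π) = Set.Icc 0 (2*π) := uIcc_of_le (by linarith)
  have hbase_pos : ∀ θ ∈ Set.Icc (0:ℝ) (2*π), 0 < a + min θ (2*π - θ) / 4 := by
    intro θ hθ
    have h1 : 0 ≤ min θ (2*π - θ) := le_min hθ.1 (by linarith [hθ.2])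
    linarith
  -- pointwise bound
  have hpw : ∀ θ ∈ Set.Icc (0:ℝ) (2*π), ‖φ (1 - circleMap 0 r θ)‖ ≤ M θ := by
    intro θ hθ
    have hz : circleMap 0 r θ ∈ Metric.ball (0:ℂ) 1 := by
      simp only [Metric.mem_ball, dist_zero_right, norm_circleMap_zero]
      rw [_root_.abs_of_pos (by linarith : (0:ℝ) < r)]; exact hr1
    have h1 := pointwise_bound hA hB hBB' hbound hz
    refine h1.trans ?_
    have h2 : ‖(1:ℂ) - circleMap 0 r θ‖ ^ (-B') ≤ (2:ℝ)^B' * F θ := by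
      have hg := geom_lb hr hr1.le hθ.1 hθ.2
      have hb0 := hbase_pos θ hθ
      have h3 : ‖(1:ℂ) - circleMap 0 r θ‖ ^ (-B') ≤ ((a + min θ (2*π - θ)/4)/2) ^ (-B') :=
        Real.rpow_le_rpow_of_nonpos (by linarith) hg (by linarith)
      refine h3.trans_eq ?_
      rw [Real.div_rpow (by linarith) (by norm_num), hF_def]
      rw [Real.rpow_neg (by norm_num : (0:ℝ) ≤ 2)]
      field_simp
    simp only [hM_def]
    rw [← hc0_def]
    nlinarith [hc0, h2, Real.rpow_nonneg (norm_nonneg ((1:ℂ) - circleMap 0 r θ)) (-B')]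
  -- continuity and integrability
  have hFc : ContinuousOn F (Set.Icc 0 (2*π)) := by
    apply ContinuousOn.rpow_const
    · fun_prop
    · intro θ hθ
      exact Or.inl (ne_of_gt (hbase_pos θ hθ))
  have hMc : ContinuousOn M (Set.Icc 0 (2*π)) := by
    apply ContinuousOn.mul continuousOn_const
    exact (continuousOn_const.add (continuousOn_const.mul hFc))
  have hint1 : IntervalIntegrable (fun θ : ℝ => ‖φ (1 - circleMap 0 r θ)‖) MeasureTheory.volume 0 (2*π) :=
    (hcont.mono (by rw [hIcc])).intervalIntegrable
  have hintM : IntervalIntegrable M MeasureTheory.volume 0 (2*π) :=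
    (hMc.mono (by rw [hIcc])).intervalIntegrable
  have hintF : IntervalIntegrable F MeasureTheory.volume 0 (2*π) :=
    (hFc.mono (by rw [hIcc])).intervalIntegrable
  -- step 1 : compare with M
  have step1 : ∫ θ in (0:ℝ)..2*π, ‖φ (1 - circleMap 0 r θ)‖ ≤ ∫ θ in (0:ℝ)..2*π, M θ :=
    intervalIntegral.integral_mono_on (by linarith) hint1 hintM hpw
  -- step 2 : compute / bound the F integral
  have hintF1 : IntervalIntegrable F MeasureTheory.volume 0 π :=
    (hFc.mono (by rw [uIcc_of_le hπ.le]; exact Icc_subset_Icc le_rfl (by linarith))).intervalIntegrable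
  have hintF2 : IntervalIntegrable F MeasureTheory.volume π (2*π) :=
    (hFc.mono (by rw [uIcc_of_le (by linarith)]; exact Icc_subset_Icc hπ.le le_rfl)).intervalIntegrable
  have hsplit : ∫ θ in (0:ℝ)..2*π, F θ = (∫ θ in (0:ℝ)..π, F θ) + ∫ θ in π..(2*π), F θ :=
    (intervalIntegral.integral_add_adjacent_intervals hintF1 hintF2).symm
  have heq1 : ∫ θ in (0:ℝ)..π, F θ = ∫ θ in (0:ℝ)..π, h θ := by
    apply intervalIntegral.integral_congr
    intro θ hθ
    rw [uIcc_of_le hπ.le] at hθ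
    simp only [hF_def, hh_def]
    rw [min_eq_left (by linarith [hθ.1, hθ.2])]
    ring_nf
  have heq2 : ∫ θ in π..(2*π), F θ = ∫ θ in (0:ℝ)..π, h θ := by
    have : ∫ θ in π..(2*π), F θ = ∫ θ in π..(2*π), h (2*π - θ) := by
      apply intervalIntegral.integral_congr
      intro θ hθ
      rw [uIcc_of_le (by linarith)] at hθ
      simp only [hF_def, hh_def]
      rw [min_eq_right (by linarith [hθ.1, hθ.2])]
      ring_nf
    rw [this, intervalIntegral.integral_comp_sub_left h (2*π)]
    congr 1 <;> ring
  have hcomp : ∫ θ in (0:ℝ)..π, h θ = 4 * ∫ x in a..(1/4*π + a), x ^ (-B') := by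
    rw [hh_def]
    rw [intervalIntegral.integral_comp_mul_add (fun x => x ^ (-B')) (by norm_num : (1/4:ℝ) ≠ 0) a]
    norm_num [smul_eq_mul]
  have hval : ∫ x in a..(1/4*π + a), x ^ (-B') =
      ((1/4*π + a) ^ (-B'+1) - a ^ (-B'+1)) / (-B'+1) := by
    apply _root_.integral_rpow
    refine Or.inr ⟨by intro hcon; linarith, ?_⟩
    · intro hcon
      rw [uIcc_of_le (by linarith)] at hcon
      linarith [hcon.1]
  set t2 := (2:ℝ)^B' with ht2_def
  have ht2 : 0 < t2 := Real.rpow_pos_of_pos (by norm_num) _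
  have hage : 1 ≤ a ^ (1-B') := by
    calc (1:ℝ) = (1:ℝ) ^ (1-B') := (Real.one_rpow _).symm
    _ ≤ a ^ (1-B') := Real.rpow_le_rpow_of_nonpos ha ha1 (by linarith)
  have hFbound : ∫ θ in (0:ℝ)..2*π, F θ ≤ 8/(B'-1) * a^(1-B') := by
    rw [hsplit, heq1, heq2, hcomp, hval]
    have hU : (0:ℝ) ≤ (1/4*π + a) ^ (-B'+1) := Real.rpow_nonneg (by positivity) _
    have hden : (0:ℝ) < B' - 1 := by linarith
    have hne : (-B'+1 : ℝ) ≠ 0 := ne_of_lt (by linarith)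
    have hne2 : (B'-1 : ℝ) ≠ 0 := ne_of_gt hden
    have e1 : ((1/4*π + a) ^ (-B'+1) - a ^ (-B'+1)) / (-B'+1)
        = (a ^ (-B'+1) - (1/4*π + a) ^ (-B'+1)) / (B'-1) := by
      rw [div_eq_div_iff hne hne2]; ring
    have e3 : a ^ (-B'+1) = a ^ (1-B') := by congr 1; ring
    rw [e1, e3]
    have e2 : (a ^ (1-B') - (1/4*π + a) ^ (-B'+1)) / (B'-1) ≤ a ^ (1-B') / (B'-1) := by
      gcongr
      linarith
    have e4 : 8/(B'-1)*a^(1-B') = 8*(a^(1-B')/(B'-1)) := by ring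
    linarith
  have hM_int : ∫ θ in (0:ℝ)..2*π, M θ = c0 * (2*π) + c0 * t2 * ∫ θ in (0:ℝ)..2*π, F θ := by
    simp only [hM_def]
    rw [intervalIntegral.integral_const_mul,
      intervalIntegral.integral_add intervalIntegrable_const (hintF.const_mul _),
      intervalIntegral.integral_const_mul, intervalIntegral.integral_const]
    simp only [smul_eq_mul]
    ring
  have hfin : c0 * (2*π) + c0 * t2 * (8/(B'-1) * a^(1-B'))
      ≤ (c0 * (2*π + t2 * (8/(B'-1)))) * a^(1-B') := by
    have h8 : (0:ℝ) < 8/(B'-1) := div_pos (by norm_num) (by linarith)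
    nlinarith [mul_nonneg (mul_nonneg hc0.le (by positivity : (0:ℝ) ≤ 2*π))
      (sub_nonneg.mpr hage), mul_pos (mul_pos hc0 ht2) h8]
  calc ∫ θ in (0:ℝ)..2*π, ‖φ (1 - circleMap 0 r θ)‖ ≤ ∫ θ in (0:ℝ)..2*π, M θ := step1
    _ = c0 * (2*π) + c0 * t2 * ∫ θ in (0:ℝ)..2*π, F θ := hM_int
    _ ≤ c0 * (2*π) + c0 * t2 * (8/(B'-1) * a^(1-B')) := by
        have := mul_pos hc0 ht2
        gcongr
    _ ≤ (c0 * (2*π + t2 * (8/(B'-1)))) * a^(1-B') := hfin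
    _ = (A * Real.exp (B*π) * (2:ℝ)^B * (2*π + (2:ℝ)^B' * (8/(B'-1)))) * (1-r)^(1-B') := by
        rw [hc0_def, ht2_def, ha_def]

lemma coeff_poly_bound {A B B' : ℝ} (hA : 0 < A) (hB : 0 < B) (hBB' : B ≤ B') (hB1 : 1 < B')
    {b : ℕ → ℂ} {φ : ℂ → ℂ}
    (hφ : ∀ s ∈ Metric.ball (1:ℂ) 1, HasSum (fun j : ℕ => b j * (1 - s)^j) (φ s))
    (hbound : ∀ s ∈ Metric.ball (1:ℂ) 1, ‖φ s‖ ≤ A * Real.exp (B * ‖Complex.log s‖))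
    (hcont : ContinuousOn φ (Metric.ball (1:ℂ) 1)) :
    ∃ K : ℝ, 0 ≤ K ∧ ∀ j : ℕ, ‖b j‖ ≤ K * ((j:ℝ) + 2) ^ (B' - 1) := by
  have hπ : 0 < π := Real.pi_pos
  set CI := A * Real.exp (B*π) * (2:ℝ)^B * (2*π + (2:ℝ)^B' * (8/(B'-1))) with hCI_def
  have hCI : 0 < CI := by
    have h1 : (0:ℝ) < (2:ℝ)^B' := Real.rpow_pos_of_pos two_pos _
    have h2 : (0:ℝ) < 8/(B'-1) := div_pos (by norm_num) (by linarith)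
    have h3 : (0:ℝ) < 2*π + (2:ℝ)^B' * (8/(B'-1)) := by positivity
    positivity
  refine ⟨(2*π)⁻¹ * CI * 3, by positivity, ?_⟩
  intro j
  have h2j : (0:ℝ) < (j:ℝ) + 2 := by positivity
  set r := 1 - 1/((j:ℝ)+2) with hr_def
  have hinv2 : 1/((j:ℝ)+2) ≤ 1/2 := by
    rw [div_le_div_iff₀ h2j (by norm_num)]
    have : (0:ℝ) ≤ (j:ℝ) := Nat.cast_nonneg j
    linarith
  have hinvpos : 0 < 1/((j:ℝ)+2) := by positivity
  have hrhalf : 1/2 ≤ r := by rw [hr_def]; linarith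
  have hr0 : 0 < r := lt_of_lt_of_le (by norm_num) hrhalf
  have hr1 : r < 1 := by rw [hr_def]; linarith
  have hcont' : ContinuousOn (fun θ : ℝ => ‖φ (1 - circleMap 0 r θ)‖) (Set.uIcc 0 (2*π)) := by
    apply ContinuousOn.norm
    apply hcont.comp ((continuous_const.sub (continuous_circleMap 0 r)).continuousOn)
    intro θ _
    simp only [Metric.mem_ball, dist_eq_norm, Pi.sub_apply]
    rw [show (1:ℂ) - circleMap 0 r θ - 1 = -circleMap 0 r θ by ring, norm_neg,
      norm_circleMap_zero, _root_.abs_of_pos hr0]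
    exact hr1
  have h1 := coeff_est hφ hr0 hr1 j
  have h2 := integral_est hA hB hBB' hB1 hbound hcont' hrhalf hr1
  -- (1-r)^(1-B') = (j+2)^(B'-1)
  have e1 : (1 - r) ^ (1-B') = ((j:ℝ)+2) ^ (B'-1) := by
    rw [hr_def, show (1:ℝ) - (1 - 1/((j:ℝ)+2)) = (((j:ℝ)+2))⁻¹ by field_simp; ring,
      Real.inv_rpow h2j.le, ← Real.rpow_neg h2j.le]
    congr 1; ring
  -- r⁻¹ ^ j ≤ 3
  have e2 : r⁻¹ ^ j ≤ 3 := by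
    have hj1 : (0:ℝ) < (j:ℝ) + 1 := by positivity
    have hne1 : ((j:ℝ)+1) ≠ 0 := ne_of_gt hj1
    have hne2 : ((j:ℝ)+2) ≠ 0 := ne_of_gt h2j
    have hinv : r⁻¹ = 1 + 1/((j:ℝ)+1) := by
      rw [hr_def, show (1:ℝ) - 1/((j:ℝ)+2) = ((j:ℝ)+1)/((j:ℝ)+2) by field_simp; ring]
      rw [inv_div]
      field_simp
      ring
    have hle : r⁻¹ ≤ Real.exp (1/((j:ℝ)+1)) := by
      rw [hinv]
      linarith [Real.add_one_le_exp (1/((j:ℝ)+1))]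
    calc r⁻¹ ^ j ≤ Real.exp (1/((j:ℝ)+1)) ^ j :=
          pow_le_pow_left₀ (by positivity) hle j
      _ = Real.exp ((j:ℝ) * (1/((j:ℝ)+1))) := by rw [Real.exp_nat_mul]
      _ ≤ Real.exp 1 := by
          apply Real.exp_le_exp.2
          rw [mul_one_div, div_le_one hj1]
          linarith
      _ ≤ 3 := by linarith [Real.exp_one_lt_d9]
  have hInonneg : 0 ≤ (2*π)⁻¹ * ∫ θ in (0:ℝ)..2*π, ‖φ (1 - circleMap 0 r θ)‖ := by
    apply mul_nonneg (by positivity)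
    apply intervalIntegral.integral_nonneg (by linarith)
    intro θ _; exact norm_nonneg _
  calc ‖b j‖ ≤ ((2*π)⁻¹ * ∫ θ in (0:ℝ)..2*π, ‖φ (1 - circleMap 0 r θ)‖) * r⁻¹ ^ j := h1
    _ ≤ ((2*π)⁻¹ * (CI * (1-r)^(1-B'))) * r⁻¹ ^ j := by
        apply mul_le_mul_of_nonneg_right _ (by positivity)
        exact mul_le_mul_of_nonneg_left h2 (by positivity)
    _ = ((2*π)⁻¹ * CI * ((j:ℝ)+2)^(B'-1)) * r⁻¹ ^ j := by rw [e1]; ring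
    _ ≤ ((2*π)⁻¹ * CI * ((j:ℝ)+2)^(B'-1)) * 3 := by
        apply mul_le_mul_of_nonneg_left e2
        have := Real.rpow_pos_of_pos h2j (B'-1)
        positivity
    _ = (2*π)⁻¹ * CI * 3 * ((j:ℝ)+2)^(B'-1) := by ring

theorem stmt_16 (m : ℕ) (hm : 1 ≤ m)
    (g : ℕ → ℂ → ℂ) (A : ℕ → ℝ) (B : ℝ) (hB : 0 < B)
    (hA : ∀ l ∈ Finset.Icc 1 m, 0 < A l)
    (hg : ∀ l ∈ Finset.Icc 1 m, DifferentiableOn ℂ (g l) borelDelta)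
    (hgbound : ∀ l ∈ Finset.Icc 1 m, ∀ ζ ∈ borelDelta, ‖g l ζ‖ ≤ A l * Real.exp (B * ‖ζ‖))
    (b : ℕ → ℕ → ℂ)
    (hb : ∀ l ∈ Finset.Icc 1 m, ∀ s ∈ Metric.ball (1 : ℂ) 1,
      HasSum (fun j : ℕ => b l j * (1 - s) ^ j) (g l (-Complex.log s)))
    (d : ℕ → ℂ)
    (hd : ∀ l ∈ Finset.Icc 1 m, ∀ j : ℕ, d (l + m * j) = b l j)
    (C : ℝ) (hC : max B 1 < C) :
    Summable (fun n : ℕ => ‖d (n + 1)‖ / (((n : ℝ) + 1) / (m : ℝ)) ^ C) := by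
  set B' := (max B 1 + C)/2 with hB'_def
  have hmB := le_max_left B 1
  have hm1 := le_max_right B 1
  have hBB' : B ≤ B' := by rw [hB'_def]; linarith
  have hB'1 : 1 < B' := by rw [hB'_def]; linarith
  have hB'C : B' < C := by rw [hB'_def]; linarith
  have hC0 : 0 < C := by linarith
  have hmaps : ∀ s ∈ Metric.ball (1:ℂ) 1, -Complex.log s ∈ borelDelta :=
    fun s hs => ⟨s, hs, rfl⟩
  have hkey : ∀ l : ℕ, ∃ K : ℝ, 0 ≤ K ∧
      (l ∈ Finset.Icc 1 m → ∀ j : ℕ, ‖b l j‖ ≤ K * ((j:ℝ)+2)^(B'-1)) := by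
    intro l
    by_cases hl : l ∈ Finset.Icc 1 m
    · have hbnd : ∀ s ∈ Metric.ball (1:ℂ) 1,
          ‖g l (-Complex.log s)‖ ≤ A l * Real.exp (B * ‖Complex.log s‖) := by
        intro s hs
        have := hgbound l hl _ (hmaps s hs)
        rwa [norm_neg] at this
      have hcont : ContinuousOn (fun s => g l (-Complex.log s)) (Metric.ball (1:ℂ) 1) := by
        apply ((hg l hl).continuousOn).comp _ (fun s hs => hmaps s hs)
        apply continuousOn_of_forall_continuousAt
        intro s hs
        apply ContinuousAt.neg
        apply continuousAt_clog
        rw [Complex.mem_slitPlane_iff]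
        left
        have h1 : ‖s - 1‖ < 1 := by
          rw [Metric.mem_ball, dist_eq_norm] at hs; exact hs
        have h2 : (s.re - 1)^2 + s.im^2 < 1 := by
          have h3 : ‖s - 1‖^2 < 1 := by nlinarith [norm_nonneg (s - 1)]
          rw [Complex.sq_norm, Complex.normSq_apply] at h3
          simp only [Complex.sub_re, Complex.sub_im, Complex.one_re, Complex.one_im] at h3
          nlinarith
        nlinarith
      obtain ⟨K, hK0, hK⟩ := coeff_poly_bound (hA l hl) hB hBB' hB'1 (hb l hl) hbnd hcont
      exact ⟨K, hK0, fun _ => hK⟩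
    · exact ⟨0, le_rfl, fun h => absurd h hl⟩
  choose K hK0 hK using hkey
  set K0 := ∑ l ∈ Finset.Icc 1 m, K l with hK0_def
  have hK0nn : 0 ≤ K0 := Finset.sum_nonneg fun i _ => hK0 i
  have hKle : ∀ l ∈ Finset.Icc 1 m, K l ≤ K0 :=
    fun l hl => Finset.single_le_sum (fun i _ => hK0 i) hl
  have hm0 : (0:ℝ) < m := by exact_mod_cast hm
  set e := B' - 1 - C with he_def
  have hec : e < -1 := by rw [he_def]; linarith
  have he_neg : e ≤ 0 := by linarith
  have hDpos : (0:ℝ) < (3*(m:ℝ))^C := Real.rpow_pos_of_pos (by positivity) _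
  set CC := K0 * (3*(m:ℝ))^C / (m:ℝ)^e with hCC_def
  have hsum : Summable (fun n : ℕ => CC * ((n:ℝ)+1)^e) := by
    apply Summable.mul_left
    have h0 : Summable (fun n : ℕ => ((n:ℝ))^e) := Real.summable_nat_rpow.2 hec
    have h1 := (summable_nat_add_iff 1).2 h0
    refine h1.congr fun n => ?_
    push_cast
    ring_nf
  apply Summable.of_nonneg_of_le _ _ hsum
  · intro n
    apply div_nonneg (norm_nonneg _) (Real.rpow_nonneg (by positivity) _)
  · intro n
    set j := n / m with hj_def
    set l := n % m + 1 with hl_def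
    have hml : 0 < m := hm
    have hl_mem : l ∈ Finset.Icc 1 m := by
      rw [Finset.mem_Icc]
      have := Nat.mod_lt n hml
      omega
    have hdn : d (n + 1) = b l j := by
      rw [← hd l hl_mem j]
      congr 1
      have h4 : n % m + m * j = n := Nat.mod_add_div n m
      omega
    have hjn : (j:ℝ) ≤ (n:ℝ) := by exact_mod_cast Nat.div_le_self n m
    have hnm : (n:ℝ) + 1 ≤ (m:ℝ) * ((j:ℝ)+1) := by
      have h2 : n + 1 ≤ m * (j + 1) := by
        have h3 := Nat.mod_lt n hml
        have h4 : n % m + m * j = n := Nat.mod_add_div n m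
        have h5 : m * (j+1) = m*j + m := by ring
        omega
      exact_mod_cast h2
    have hj2pos : (0:ℝ) < (j:ℝ)+2 := by positivity
    have hbase1 : ((j:ℝ)+2)/(3*m) ≤ ((n:ℝ)+1)/m := by
      rw [div_le_div_iff₀ (by positivity) hm0]
      nlinarith
    have hbase2 : ((n:ℝ)+1)/m ≤ (j:ℝ)+2 := by
      rw [div_le_iff₀ hm0]
      nlinarith
    have hnum : ‖d (n+1)‖ ≤ K0 * ((j:ℝ)+2)^(B'-1) := by
      rw [hdn]
      refine (hK l hl_mem j).trans ?_
      exact mul_le_mul_of_nonneg_right (hKle l hl_mem) (Real.rpow_nonneg hj2pos.le _)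
    have hden2_pos : (0:ℝ) < (((j:ℝ)+2)/(3*m))^C := Real.rpow_pos_of_pos (by positivity) _
    have hstep1 : ‖d (n+1)‖/(((n:ℝ)+1)/m)^C ≤
        (K0 * ((j:ℝ)+2)^(B'-1)) / (((j:ℝ)+2)/(3*m))^C := by
      apply div_le_div₀ (mul_nonneg hK0nn (Real.rpow_nonneg hj2pos.le _)) hnum hden2_pos
      exact Real.rpow_le_rpow (by positivity) hbase1 hC0.le
    refine hstep1.trans ?_
    have e3 : (((j:ℝ)+2)/(3*m))^C = ((j:ℝ)+2)^C / (3*(m:ℝ))^C :=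
      Real.div_rpow hj2pos.le (by positivity) C
    have hq : (0:ℝ) < ((n:ℝ)+1)/m := by positivity
    have emon : ((j:ℝ)+2)^e ≤ (((n:ℝ)+1)/m)^e :=
      Real.rpow_le_rpow_of_nonpos hq hbase2 he_neg
    have ediv : (((n:ℝ)+1)/m)^e = ((n:ℝ)+1)^e / (m:ℝ)^e :=
      Real.div_rpow (by positivity) hm0.le e
    have hXC : (0:ℝ) < ((j:ℝ)+2)^C := Real.rpow_pos_of_pos hj2pos _
    calc (K0 * ((j:ℝ)+2)^(B'-1)) / (((j:ℝ)+2)/(3*m))^C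
        = K0 * (3*(m:ℝ))^C * ((j:ℝ)+2)^e := by
          have hrs : ((j:ℝ)+2)^e = ((j:ℝ)+2)^(B'-1) / ((j:ℝ)+2)^C := by
            rw [he_def, Real.rpow_sub hj2pos]
          rw [e3, hrs, div_div_eq_mul_div]
          ring
      _ ≤ K0 * (3*(m:ℝ))^C * (((n:ℝ)+1)/m)^e :=
          mul_le_mul_of_nonneg_left emon (mul_nonneg hK0nn hDpos.le)
      _ = CC * ((n:ℝ)+1)^e := by
          rw [ediv, hCC_def]; ring
end
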